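/- arXiv:2007.15331 — 8 statements merged into one kernel-verified Lean document; each statement's English description precedes it below -/
import Mathlib

section
/- Let Z be a random variable taking values in a bounded interval [a,b]. Then for any positive integer m and any x in (0,1), with probability at least 1 - x, the empirical mean Z̄_m and empirical variance V̄_m of m i.i.d. copies of Z satisfy |Z̄_m - E[Z]| ≤ sqrt(2 V̄_m log(3/x) / m) + 3 (b-a) log(3/x) / m. -/
open MeasureTheory ProbabilityTheory

/-- Empirical mean of the first `m` of the random variables `Z i`. -/
noncomputable def empMean {Ω : Type*} (Z : ℕ → Ω → ℝ) (m : ℕ) (ω : Ω) : ℝ :=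
  (∑ i ∈ Finset.range m, Z i ω) / m

/-- Empirical variance of the first `m` of the random variables `Z i`. -/
noncomputable def empVar {Ω : Type*} (Z : ℕ → Ω → ℝ) (m : ℕ) (ω : Ω) : ℝ :=
  (∑ i ∈ Finset.range m, (Z i ω - empMean Z m ω) ^ 2) / m

section EmpiricalBernsteinAux

open Real Finset


lemma exp_le_quad_of_nonpos {y : ℝ} (hy : y ≤ 0) : Real.exp y ≤ 1 + y + y^2/2 := by
  have key : ∀ z : ℝ, 0 ≤ z → Real.exp (-z) ≤ 1 - z + z^2/2 := by
    intro z hz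
    set f : ℝ → ℝ := fun z => 1 - z + z^2/2 - Real.exp (-z) with hf
    have hd : ∀ w : ℝ, HasDerivAt f (w - 1 + Real.exp (-w)) w := by
      intro w
      have h1 : HasDerivAt (fun w : ℝ => Real.exp (-w)) (-Real.exp (-w)) w := by
        simpa [Function.comp_def] using (Real.hasDerivAt_exp (-w)).comp w (hasDerivAt_neg w)
      have h2 : HasDerivAt (fun w : ℝ => 1 - w + w^2/2) (-1 + w) w := by
        have := ((hasDerivAt_pow 2 w).div_const 2)
        have h3 := ((hasDerivAt_const w (1:ℝ)).sub (hasDerivAt_id w)).add this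
        exact h3.congr_deriv (by norm_num)
      have := h2.sub h1
      exact this.congr_deriv (by ring)
    have hmono : Monotone f :=
      monotone_of_deriv_nonneg (fun w => (hd w).differentiableAt)
        (fun w => by
          rw [(hd w).deriv]
          nlinarith [Real.add_one_le_exp (-w)])
    have h0 : f 0 = 0 := by simp [hf]
    have := hmono hz
    rw [h0] at this
    simp only [hf] at this
    linarith
  have := key (-y) (by linarith)
  simp only [neg_neg] at this
  nlinarith [this]

lemma two_mul_three_pow_le_factorial (n : ℕ) : 2 * 3^n ≤ (n+2).factorial := by
  induction n with
  | zero => simp [Nat.factorial]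
  | succ k ih =>
    have : (k+3).factorial = (k+3) * (k+2).factorial := rfl
    calc 2 * 3^(k+1) = 3 * (2 * 3^k) := by ring
    _ ≤ 3 * (k+2).factorial := by omega
    _ ≤ (k+3) * (k+2).factorial := by
        exact Nat.mul_le_mul_right _ (by omega)
    _ = (k+3).factorial := rfl

lemma exp_le_quad_of_nonneg {y A : ℝ} (h0 : 0 ≤ y) (hy : y ≤ A) (hA3 : A < 3) :
    Real.exp y ≤ 1 + y + y^2 / (2*(1 - A/3)) := by
  have hA0 : 0 ≤ A := le_trans h0 hy
  have hexp : Real.exp y = ∑' n : ℕ, y^n / n.factorial := by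
    rw [Real.exp_eq_exp_ℝ]; exact congrFun NormedSpace.exp_eq_tsum_div y
  have hS : Summable (fun n : ℕ => y^n / n.factorial) := Real.summable_pow_div_factorial y
  have hS2 : Summable (fun n : ℕ => y^(n+2) / (n+2).factorial) := by
    have := (summable_nat_add_iff 2).mpr hS
    exact this
  have hgeo : Summable (fun n : ℕ => y^2/2 * (A/3)^n) := by
    refine Summable.mul_left _ ?_
    exact summable_geometric_of_lt_one (by positivity) (by linarith)
  have hsplit : (∑' n : ℕ, y^n / n.factorial)
      = (∑ i ∈ Finset.range 2, y^i / i.factorial) + ∑' n : ℕ, y^(n+2) / (n+2).factorial := by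
    rw [← Summable.sum_add_tsum_nat_add 2 hS]
  have hfin : (∑ i ∈ Finset.range 2, y^i / (i.factorial : ℝ)) = 1 + y := by
    simp [Finset.sum_range_succ, Nat.factorial]
  have hterm : ∀ n : ℕ, y^(n+2) / (n+2).factorial ≤ y^2/2 * (A/3)^n := by
    intro n
    have h3pow : (0:ℝ) < 2 * 3^n := by positivity
    have hfa : (2 * 3^n : ℝ) ≤ ((n+2).factorial : ℝ) := by
      exact_mod_cast two_mul_three_pow_le_factorial n
    have hfa0 : (0:ℝ) < ((n+2).factorial : ℝ) := by positivity
    calc y^(n+2) / ((n+2).factorial : ℝ) ≤ y^(n+2) / (2 * 3^n) := by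
          apply div_le_div_of_nonneg_left (by positivity) h3pow hfa
    _ = y^2 * y^n / (2 * 3^n) := by ring
    _ ≤ y^2 * A^n / (2 * 3^n) := by
          gcongr
    _ = y^2/2 * (A/3)^n := by rw [div_pow]; ring
  have htail : (∑' n : ℕ, y^(n+2) / (n+2).factorial) ≤ y^2/2 * (1 - A/3)⁻¹ := by
    calc (∑' n : ℕ, y^(n+2) / (n+2).factorial) ≤ ∑' n : ℕ, y^2/2 * (A/3)^n :=
          Summable.tsum_le_tsum hterm hS2 hgeo
    _ = y^2/2 * ∑' n : ℕ, (A/3)^n := tsum_mul_left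
    _ = y^2/2 * (1 - A/3)⁻¹ := by
          rw [tsum_geometric_of_lt_one (by positivity) (by linarith : A/3 < 1)]
  have hpos : 0 < 1 - A/3 := by linarith
  have : y^2/2 * (1 - A/3)⁻¹ = y^2 / (2*(1 - A/3)) := by
    field_simp
  rw [hexp, hsplit, hfin, ← this]
  linarith

lemma exp_le_quad {y A : ℝ} (hy : y ≤ A) (hA0 : 0 ≤ A) (hA3 : A < 3) :
    Real.exp y ≤ 1 + y + y^2 / (2*(1 - A/3)) := by
  rcases le_or_gt y 0 with h | h
  · have h1 := exp_le_quad_of_nonpos h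
    have hpos : 0 < 1 - A/3 := by linarith
    have : y^2/2 ≤ y^2 / (2*(1 - A/3)) := by
      apply div_le_div_of_nonneg_left (sq_nonneg y) (by linarith) (by nlinarith)
    linarith
  · exact exp_le_quad_of_nonneg h.le hy hA3

lemma integrable_of_ae_abs_le {Ω : Type*} {mΩ : MeasurableSpace Ω} {P : Measure Ω}
    [IsFiniteMeasure P] {f : Ω → ℝ} (hf : AEStronglyMeasurable f P) {C : ℝ}
    (h : ∀ᵐ ω ∂P, |f ω| ≤ C) : Integrable f P := by
  refine (integrable_const C).mono' hf ?_
  filter_upwards [h] with ω hω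
  simpa using hω

lemma mgf_le_bernstein {Ω : Type*} {mΩ : MeasurableSpace Ω} {P : Measure Ω}
    [IsProbabilityMeasure P] {X : Ω → ℝ} (hX : Measurable X) {c : ℝ}
    (hbdd : ∀ᵐ ω ∂P, |X ω| ≤ c) (hmean : ∫ ω, X ω ∂P = 0)
    {v M t : ℝ} (hvar : ∫ ω, (X ω)^2 ∂P ≤ v) (hM : ∀ᵐ ω ∂P, X ω ≤ M)
    (hM0 : 0 ≤ M) (ht : 0 ≤ t) (htM : t*M < 3) :
    mgf X P t ≤ Real.exp (v * t^2 / (2*(1 - t*M/3))) := by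
  have htM0 : 0 ≤ t*M := mul_nonneg ht hM0
  have hden : 0 < 1 - t*M/3 := by linarith
  set K : ℝ := 1/(2*(1 - t*M/3)) with hK
  have hK0 : 0 ≤ K := by positivity
  have hXint : Integrable X P := integrable_of_ae_abs_le hX.aestronglyMeasurable hbdd
  have hX2int : Integrable (fun ω => (X ω)^2) P := by
    refine integrable_of_ae_abs_le (hX.pow_const 2).aestronglyMeasurable (C := c^2) ?_
    filter_upwards [hbdd] with ω hω
    rw [abs_of_nonneg (sq_nonneg (X ω)), ← sq_abs]
    have := abs_nonneg (X ω)
    nlinarith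
  have hexpint : Integrable (fun ω => Real.exp (t * X ω)) P := by
    refine integrable_of_ae_abs_le ((hX.const_mul t).exp).aestronglyMeasurable
      (C := Real.exp (t * c)) ?_
    filter_upwards [hbdd] with ω hω
    rw [abs_of_pos (Real.exp_pos _)]
    apply Real.exp_le_exp.2
    have : X ω ≤ c := (abs_le.1 hω).2
    exact mul_le_mul_of_nonneg_left this ht
  have hgint : Integrable (fun ω => 1 + t * X ω + K * t^2 * (X ω)^2) P :=
    ((integrable_const 1).add (hXint.const_mul t)).add (hX2int.const_mul (K * t^2))
  have hae : ∀ᵐ ω ∂P, Real.exp (t * X ω) ≤ 1 + t * X ω + K * t^2 * (X ω)^2 := by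
    filter_upwards [hM] with ω hω
    have hy : t * X ω ≤ t * M := mul_le_mul_of_nonneg_left hω ht
    have := exp_le_quad (le_trans hy (le_of_eq rfl)) htM0 htM
    calc Real.exp (t * X ω) ≤ 1 + t * X ω + (t * X ω)^2 / (2*(1 - t*M/3)) := this
    _ = 1 + t * X ω + K * t^2 * (X ω)^2 := by rw [hK]; ring
  have hint : mgf X P t ≤ ∫ ω, (1 + t * X ω + K * t^2 * (X ω)^2) ∂P :=
    integral_mono_ae hexpint hgint hae
  have hcalc : ∫ ω, (1 + t * X ω + K * t^2 * (X ω)^2) ∂P = 1 + K * t^2 * ∫ ω, (X ω)^2 ∂P := by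
    have e1 : ∫ ω, (1 + t * X ω + K * t^2 * (X ω)^2) ∂P
        = (∫ ω, (1 + t * X ω) ∂P) + ∫ ω, K * t^2 * (X ω)^2 ∂P :=
      integral_add ((integrable_const 1).add (hXint.const_mul t)) (hX2int.const_mul (K * t^2))
    have e2 : ∫ ω, (1 + t * X ω) ∂P = (∫ _ω, (1:ℝ) ∂P) + ∫ ω, t * X ω ∂P :=
      integral_add (integrable_const 1) (hXint.const_mul t)
    rw [e1, e2, integral_const, integral_const_mul, integral_const_mul, hmean]
    simp
  rw [hcalc] at hint
  have h1 : 1 + K * t^2 * ∫ ω, (X ω)^2 ∂P ≤ 1 + K * t^2 * v := by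
    have := mul_le_mul_of_nonneg_left hvar (by positivity : (0:ℝ) ≤ K * t^2)
    linarith
  have h2 : 1 + K * t^2 * v ≤ Real.exp (K * t^2 * v) := by
    have := Real.add_one_le_exp (K * t^2 * v)
    linarith
  have h3 : K * t^2 * v = v * t^2 / (2*(1 - t*M/3)) := by rw [hK]; ring
  rw [h3] at h2
  linarith

lemma bernstein_ineq {Ω : Type*} {mΩ : MeasurableSpace Ω} (P : Measure Ω)
    [IsProbabilityMeasure P] (X : ℕ → Ω → ℝ)
    (hmeas : ∀ i, Measurable (X i))
    (hindep : iIndepFun X P)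
    (hident : ∀ i, IdentDistrib (X i) (X 0) P P)
    (a' b' : ℝ) (hbdd : ∀ i, ∀ᵐ ω ∂P, X i ω ∈ Set.Icc a' b')
    (v M : ℝ) (hv : ∫ ω, (X 0 ω - ∫ ω', X 0 ω' ∂P)^2 ∂P ≤ v) (hv0 : 0 < v)
    (hM : ∀ᵐ ω ∂P, X 0 ω - ∫ ω', X 0 ω' ∂P ≤ M) (hM0 : 0 < M)
    (m : ℕ) (hm : 1 ≤ m) (L : ℝ) (hL : 0 < L) :
    P {ω | Real.sqrt (2*v*(L/m)) + M*(L/m)/3 ≤ (∑ i ∈ Finset.range m, X i ω)/m - ∫ ω', X 0 ω' ∂P}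
      ≤ ENNReal.ofReal (Real.exp (-L)) := by
  set μ0 := ∫ ω', X 0 ω' ∂P with hμ0
  have hmpos : (0:ℝ) < m := by exact_mod_cast Nat.lt_of_lt_of_le Nat.zero_lt_one hm
  set r : ℝ := L/m with hrdef
  have hr : 0 < r := div_pos hL hmpos
  set lam : ℝ := Real.sqrt (2*r/v) with hlamdef
  have hlam : 0 < lam := Real.sqrt_pos.2 (by positivity)
  have hlamsq : lam^2 = 2*r/v := Real.sq_sqrt (by positivity)
  set den : ℝ := 1 + M*lam/3 with hdendef
  have hden : 0 < den := by positivity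
  set t : ℝ := lam/den with htdef
  have ht : 0 < t := div_pos hlam hden
  have htM : t*M < 3 := by
    rw [htdef, div_mul_eq_mul_div, div_lt_iff₀ hden]
    rw [hdendef]; nlinarith
  have h1mt : 1 - t*M/3 = 1/den := by
    rw [htdef, hdendef]
    field_simp
    ring
  -- centered variables
  set Y : ℕ → Ω → ℝ := fun i ω => X i ω - μ0 with hYdef
  have hYmeas : ∀ i, Measurable (Y i) := fun i => (hmeas i).sub_const μ0
  have hYindep : iIndepFun Y P :=
    hindep.comp (fun _ => fun x => x - μ0) (fun _ => measurable_id.sub_const μ0)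
  have hYident : ∀ i, IdentDistrib (Y i) (Y 0) P P :=
    fun i => (hident i).comp (measurable_id.sub_const μ0)
  have hXint : Integrable (X 0) P := by
    refine integrable_of_ae_abs_le (hmeas 0).aestronglyMeasurable (C := max |a'| |b'|) ?_
    filter_upwards [hbdd 0] with ω hω
    exact abs_le_max_abs_abs hω.1 hω.2
  have hYmean : ∫ ω, Y 0 ω ∂P = 0 := by
    rw [hYdef]
    simp only
    rw [integral_sub hXint (integrable_const μ0), integral_const]
    simp [hμ0]
  have hYbdd : ∀ i, ∀ᵐ ω ∂P, |Y i ω| ≤ max |a' - μ0| |b' - μ0| := by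
    intro i
    filter_upwards [hbdd i] with ω hω
    exact abs_le_max_abs_abs (by simp [hYdef]; linarith [hω.1]) (by simp [hYdef]; linarith [hω.2])
  -- mgf bound for Y 0
  have hmgf0 : mgf (Y 0) P t ≤ Real.exp (v * t^2 / (2*(1 - t*M/3))) :=
    mgf_le_bernstein (hYmeas 0) (hYbdd 0) hYmean hv hM hM0.le ht.le htM
  -- integrability of exponentials
  have hexpint : ∀ i, Integrable (fun ω => Real.exp (t * Y i ω)) P := by
    intro i
    refine integrable_of_ae_abs_le ((hYmeas i).const_mul t).exp.aestronglyMeasurable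
      (C := Real.exp (t * (b' - μ0))) ?_
    filter_upwards [hbdd i] with ω hω
    rw [abs_of_pos (Real.exp_pos _)]
    apply Real.exp_le_exp.2
    apply mul_le_mul_of_nonneg_left _ ht.le
    simp only [hYdef]
    linarith [hω.2]
  -- the sum
  set S : Ω → ℝ := ∑ i ∈ Finset.range m, Y i with hSdef
  have hSapp : ∀ ω, S ω = ∑ i ∈ Finset.range m, Y i ω := by
    intro ω; rw [hSdef]; exact Finset.sum_apply ω (Finset.range m) Y
  set ε : ℝ := Real.sqrt (2*v*r) + M*r/3 with hεdef
  have hsub : {ω | ε ≤ (∑ i ∈ Finset.range m, X i ω)/m - μ0} ⊆ {ω | (m:ℝ)*ε ≤ S ω} := by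
    intro ω hω
    simp only [Set.mem_setOf_eq] at hω ⊢
    rw [hSapp]
    have hsum : ∑ i ∈ Finset.range m, Y i ω = (∑ i ∈ Finset.range m, X i ω) - m * μ0 := by
      simp only [hYdef]
      rw [Finset.sum_sub_distrib, Finset.sum_const, Finset.card_range, nsmul_eq_mul]
    rw [hsum]
    have := (le_div_iff₀ hmpos).1 (by linarith : ε + μ0 ≤ (∑ i ∈ Finset.range m, X i ω)/m)
    nlinarith
  -- Chernoff
  have hSexpint : Integrable (fun ω => Real.exp (t * S ω)) P := by
    have := hYindep.integrable_exp_mul_sum hYmeas (s := Finset.range m)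
      (fun i _ => hexpint i)
    exact this
  have hch := measure_ge_le_exp_mul_mgf (X := S) (μ := P) ((m:ℝ)*ε) ht.le hSexpint
  have hmgfS : mgf S P t = (mgf (Y 0) P t)^m := by
    rw [hSdef, hYindep.mgf_sum hYmeas]
    have : ∀ i ∈ Finset.range m, mgf (Y i) P t = mgf (Y 0) P t := by
      intro i _
      have hid : IdentDistrib (fun ω => Real.exp (t * Y i ω)) (fun ω => Real.exp (t * Y 0 ω)) P P :=
        (hYident i).comp ((measurable_id.const_mul t).exp)
      exact hid.integral_eq
    rw [Finset.prod_congr rfl this, Finset.prod_const, Finset.card_range]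
  -- exponent computation
  have hvl : Real.sqrt (2*v*r) = v*lam := by
    have h2 : 2*v*r = (v*lam)^2 := by
      rw [mul_pow, hlamsq]; field_simp
    rw [h2, Real.sqrt_sq (by positivity)]
  have hrlam : r = v*lam^2/2 := by rw [hlamsq]; field_simp
  have hexponent : -t*((m:ℝ)*ε) + m * (v * t^2 / (2*(1 - t*M/3))) = -L := by
    have hLmr : L = m * r := by rw [hrdef]; field_simp
    rw [h1mt, hεdef, hvl, hLmr, htdef]
    rw [hrlam]
    field_simp
    ring
  have hfinal : (P {ω | ε ≤ (∑ i ∈ Finset.range m, X i ω)/m - μ0}).toReal ≤ Real.exp (-L) := by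
    calc (P {ω | ε ≤ (∑ i ∈ Finset.range m, X i ω)/m - μ0}).toReal
        ≤ (P {ω | (m:ℝ)*ε ≤ S ω}).toReal :=
          ENNReal.toReal_mono (measure_ne_top P _) (measure_mono hsub)
    _ ≤ Real.exp (-t*((m:ℝ)*ε)) * mgf S P t := hch
    _ ≤ Real.exp (-t*((m:ℝ)*ε)) * (Real.exp (v * t^2 / (2*(1 - t*M/3))))^m := by
        rw [hmgfS]
        exact mul_le_mul_of_nonneg_left (pow_le_pow_left₀ mgf_nonneg hmgf0 m) (Real.exp_pos _).le
    _ = Real.exp (-t*((m:ℝ)*ε) + m * (v * t^2 / (2*(1 - t*M/3)))) := by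
        rw [← Real.exp_nat_mul, ← Real.exp_add]
    _ = Real.exp (-L) := by rw [hexponent]
  calc P {ω | ε ≤ (∑ i ∈ Finset.range m, X i ω)/m - μ0}
      = ENNReal.ofReal ((P {ω | ε ≤ (∑ i ∈ Finset.range m, X i ω)/m - μ0}).toReal) := by
        rw [ENNReal.ofReal_toReal (measure_ne_top P _)]
  _ ≤ ENNReal.ofReal (Real.exp (-L)) := ENNReal.ofReal_le_ofReal hfinal


lemma sum_sq_identity (m : ℕ) (hm : 1 ≤ m) (f : ℕ → ℝ) (μ0 : ℝ) :
    (∑ i ∈ range m, (f i - (∑ j ∈ range m, f j)/m)^2)/m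
      = (∑ i ∈ range m, (f i - μ0)^2)/m - ((∑ i ∈ range m, f i)/m - μ0)^2 := by
  have hmpos : (0:ℝ) < m := by exact_mod_cast Nat.lt_of_lt_of_le Nat.zero_lt_one hm
  have hmne : (m:ℝ) ≠ 0 := ne_of_gt hmpos
  set S : ℝ := ∑ j ∈ range m, f j with hS
  set A : ℝ := S/m with hA
  have hmA : (m:ℝ) * A = S := by rw [hA]; field_simp
  have hsub : ∑ i ∈ range m, (f i - μ0) = S - m*μ0 := by
    rw [sum_sub_distrib, sum_const, card_range, nsmul_eq_mul, hS]
  have key : ∑ i ∈ range m, (f i - A)^2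
      = (∑ i ∈ range m, (f i - μ0)^2) - m*(A - μ0)^2 := by
    have expand : ∀ i ∈ range m,
        (f i - A)^2 = (f i - μ0)^2 - (2*(A - μ0))*(f i - μ0) + (A - μ0)^2 := by
      intro i _; ring
    rw [sum_congr rfl expand, sum_add_distrib, sum_sub_distrib, ← mul_sum, hsub,
      sum_const, card_range, nsmul_eq_mul]
    linear_combination (2*(A - μ0)) * hmA
  rw [key]
  field_simp

set_option maxHeartbeats 1000000 in
lemma final_algebra (c v V D r : ℝ) (hc : 0 < c) (hv : 0 < v) (hr : 0 < r)
    (hvc : v ≤ (c/2)^2) (hV0 : 0 ≤ V) (hD0 : 0 ≤ D)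
    (hD : D ≤ Real.sqrt (2*v*r) + c*r/3)
    (hV : v - Real.sqrt (2*(c^2*v)*r) - v*r/3 - D^2 ≤ V) :
    D ≤ Real.sqrt (2*V*r) + 3*c*r := by
  set q : ℝ := Real.sqrt 2 with hq
  have hq0 : 0 < q := Real.sqrt_pos.2 (by norm_num)
  have hq2 : q^2 = 2 := Real.sq_sqrt (by norm_num)
  set s : ℝ := Real.sqrt v with hs
  have hs0 : 0 < s := Real.sqrt_pos.2 hv
  have hs2 : s^2 = v := Real.sq_sqrt hv.le
  set w : ℝ := Real.sqrt V with hw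
  have hw0 : 0 ≤ w := Real.sqrt_nonneg V
  have hw2 : w^2 = V := Real.sq_sqrt hV0
  set t : ℝ := Real.sqrt r with htd
  have ht0 : 0 < t := Real.sqrt_pos.2 hr
  have ht2 : t^2 = r := Real.sq_sqrt hr.le
  have e1 : Real.sqrt (2*v*r) = q*s*t := by
    rw [show 2*v*r = 2*(v*r) by ring, Real.sqrt_mul (by norm_num : (0:ℝ) ≤ 2),
      Real.sqrt_mul hv.le, hq, hs, htd]; ring
  have e2 : Real.sqrt (2*(c^2*v)*r) = q*(c*s)*t := by
    rw [show 2*(c^2*v)*r = 2*((c^2*v)*r) by ring, Real.sqrt_mul (by norm_num : (0:ℝ) ≤ 2),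
      Real.sqrt_mul (by positivity : (0:ℝ) ≤ c^2*v), Real.sqrt_mul (sq_nonneg c) v,
      Real.sqrt_sq hc.le, hq, hs, htd]
    ring
  have e3 : Real.sqrt (2*V*r) = q*w*t := by
    rw [show 2*V*r = 2*(V*r) by ring, Real.sqrt_mul (by norm_num : (0:ℝ) ≤ 2),
      Real.sqrt_mul hV0, hq, hw, htd]; ring
  have hDt : D ≤ q*s*t + c*t^2/3 := by rw [ht2]; rw [e1] at hD; exact hD
  have hVt : s^2 - q*(c*s)*t - s^2*t^2/3 - D^2 ≤ w^2 := by
    rw [ht2, hs2, hw2]; rw [e2] at hV; exact hV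
  rw [e3, ← ht2]
  have hsc : s ≤ c/2 := by
    rw [hs]
    calc Real.sqrt v ≤ Real.sqrt ((c/2)^2) := Real.sqrt_le_sqrt hvc
    _ = c/2 := Real.sqrt_sq (by positivity)
  rcases le_or_gt (q*s) ((8/3)*c*t) with hcase | hcase
  · -- easy case
    have h1 : (q*s)*t ≤ ((8/3)*c*t)*t := mul_le_mul_of_nonneg_right hcase ht0.le
    have h2 : (0:ℝ) ≤ q*w*t := by positivity
    linarith [h1, h2, hDt]
  · -- main case
    have eq2s : q*(q*s) = 2*s := by linear_combination s*hq2
    have hA1 : 8*q*c*t < 6*s := by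
      have h := mul_lt_mul_of_pos_left hcase hq0
      linarith [h, eq2s]
    have hcq : 2*s ≤ c := by linarith
    have hks : (4*q/3)*c*t < s := by linarith [hA1]
    have h8 : 8*q*t < 3 := by
      have hct : c*(8*q*t) < c*3 := by linarith [hA1, hcq]
      exact (mul_lt_mul_iff_right₀ hc).mp hct
    have ht316 : 16*t < 3*q := by
      have h := mul_lt_mul_of_pos_left h8 hq0
      have e : q*(8*q*t) = 16*t := by linear_combination (8*t)*hq2
      linarith [h, e]
    have hD2 : D^2 ≤ (q*s*t + c*t^2/3)^2 := pow_le_pow_left₀ hD0 hDt 2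
    have hexp : (q*s*t + c*t^2/3)^2 = 2*s^2*t^2 + (2*q/3)*c*s*t^3 + c^2*t^4/9 := by
      linear_combination (s^2*t^2)*hq2
    have b1 : (7/3)*s^2*t^2 ≤ (7/12)*c^2*t^2 := by
      have h4 : 4*s^2 ≤ c^2 := by
        have := mul_le_mul hcq hcq (by linarith) (by linarith)
        linarith [this]
      linarith [mul_le_mul_of_nonneg_right h4 (sq_nonneg t)]
    have b2 : (2*q/3)*c*s*t^3 ≤ (1/8)*c^2*t^2 := by
      have m1 : (2*q/3)*c*t^3*s ≤ (2*q/3)*c*t^3*(c/2) :=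
        mul_le_mul_of_nonneg_left hsc (by positivity)
      have m2 : (8*q*t)*(c^2*t^2/24) ≤ 3*(c^2*t^2/24) :=
        mul_le_mul_of_nonneg_right h8.le (by positivity)
      linarith [m1, m2]
    have b3 : c^2*t^4/9 ≤ (1/128)*c^2*t^2 := by
      have h256 : 256*t^2 ≤ 18 := by
        have hsq : (16*t)*(16*t) < (3*q)*(3*q) :=
          mul_lt_mul'' ht316 ht316 (by positivity) (by positivity)
        have e6 : (3*q)*(3*q) = 18 := by linear_combination 9*hq2
        linarith [hsq, e6]
      linarith [mul_le_mul_of_nonneg_right h256 (by positivity : (0:ℝ) ≤ c^2*t^2/(9*256))]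
    have hcst : 4*q*c^2*t^2 ≤ 3*c*s*t := by
      have := mul_le_mul_of_nonneg_right hA1.le (by positivity : (0:ℝ) ≤ c*t/2)
      linarith [this]
    have hpoly : (32/9)*c^2*t^2 + (7/3)*s^2*t^2 + (2*q/3)*c*s*t^3 + c^2*t^4/9
        ≤ (5*q/3)*c*s*t := by
      have m3 : (5*q/9)*(4*q*c^2*t^2) ≤ (5*q/9)*(3*c*s*t) :=
        mul_le_mul_of_nonneg_left hcst (by positivity)
      have e4 : (5*q/9)*(4*q*c^2*t^2) = (40/9)*(c^2*t^2) := by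
        linear_combination ((20/9)*c^2*t^2)*hq2
      have hX : (0:ℝ) < c^2*t^2 := by positivity
      linarith [m3, e4, b1, b2, b3, hX]
    have eexp : (s - (4*q/3)*c*t)^2 = s^2 - (8*q/3)*c*s*t + (32/9)*c^2*t^2 := by
      linear_combination ((16/9)*c^2*t^2)*hq2
    have hkey : (s - (4*q/3)*c*t)^2 ≤ w^2 := by
      linarith [hVt, hD2, hexp, hpoly, eexp]
    have hwge : s - (4*q/3)*c*t ≤ w := by
      rw [hw]
      refine (Real.le_sqrt' (by linarith)).mpr ?_
      rw [← hw2]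
      exact hkey
    have m4 : q*t*(s - (4*q/3)*c*t) ≤ q*t*w := mul_le_mul_of_nonneg_left hwge (by positivity)
    have e5 : q*t*(s - (4*q/3)*c*t) = q*s*t - (8/3)*c*t^2 := by
      linear_combination (-(4/3)*c*t^2)*hq2
    linarith [m4, e5, hDt]

end EmpiricalBernsteinAux

section Main
open Real

set_option maxHeartbeats 2000000 in
/-- empirical Bernstein concentration inequality: with probability
at least 1 - x, `|Z̄_m - E[Z]| ≤ sqrt(2 V̄_m log(3/x)/m) + 3(b-a) log(3/x)/m`. -/
theorem stmt_0 {Ω : Type*} {mΩ : MeasurableSpace Ω} (P : Measure Ω)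
    [IsProbabilityMeasure P] (a b : ℝ) (Z : ℕ → Ω → ℝ)
    (hmeas : ∀ i, Measurable (Z i))
    (hindep : iIndepFun Z P)
    (hident : ∀ i, IdentDistrib (Z i) (Z 0) P P)
    (hbdd : ∀ i, ∀ᵐ ω ∂P, Z i ω ∈ Set.Icc a b)
    (m : ℕ) (hm : 1 ≤ m) (x : ℝ) (hx : x ∈ Set.Ioo (0 : ℝ) 1) :
    ENNReal.ofReal (1 - x) ≤
      P {ω | |empMean Z m ω - ∫ ω', Z 0 ω' ∂P| ≤
        Real.sqrt (2 * empVar Z m ω * Real.log (3 / x) / m)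
          + 3 * (b - a) * Real.log (3 / x) / m} := by
  obtain ⟨hx0, hx1⟩ := hx
  obtain ⟨μ0, hμ0⟩ : ∃ μ0 : ℝ, μ0 = ∫ ω', Z 0 ω' ∂P := ⟨_, rfl⟩
  obtain ⟨L, hLdef⟩ : ∃ L : ℝ, L = Real.log (3/x) := ⟨_, rfl⟩
  rw [← hμ0, ← hLdef]
  have hmpos : (0:ℝ) < m := by
    have : (1:ℝ) ≤ m := by exact_mod_cast hm
    linarith
  have hLpos : 0 < L := by
    rw [hLdef]
    apply Real.log_pos
    rw [lt_div_iff₀ hx0]; linarith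
  have hexp3 : Real.exp (-L) = x/3 := by
    rw [hLdef, ← Real.log_inv, Real.exp_log (by positivity)]
    rw [inv_div]
  have hab : a ≤ b := by
    by_contra hcon
    have hne : (ae P).NeBot := by
      refine MeasureTheory.ae_neBot.2 ?_
      exact IsProbabilityMeasure.ne_zero P
    obtain ⟨ω, hω⟩ := (hbdd 0).exists
    exact hcon (le_trans hω.1 hω.2)
  have hba0 : 0 ≤ b - a := by linarith
  -- integrability and basic facts
  have hZint : ∀ i, Integrable (Z i) P := by
    intro i
    refine integrable_of_ae_abs_le (hmeas i).aestronglyMeasurable (C := max |a| |b|) ?_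
    filter_upwards [hbdd i] with ω hω
    exact abs_le_max_abs_abs hω.1 hω.2
  have hmem2 : MemLp (Z 0) 2 P := memLp_of_bounded (hbdd 0) (hmeas 0).aestronglyMeasurable 2
  have hμ0a : a ≤ μ0 := by
    rw [hμ0]
    have : ∫ _ω', (a:ℝ) ∂P ≤ ∫ ω', Z 0 ω' ∂P := by
      apply integral_mono_ae (integrable_const a) (hZint 0)
      filter_upwards [hbdd 0] with ω hω using hω.1
    simpa using this
  have hμ0b : μ0 ≤ b := by
    rw [hμ0]
    have : ∫ ω', Z 0 ω' ∂P ≤ ∫ _ω', (b:ℝ) ∂P := by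
      apply integral_mono_ae (hZint 0) (integrable_const b)
      filter_upwards [hbdd 0] with ω hω using hω.2
    simpa using this
  obtain ⟨v, hvdef⟩ : ∃ v : ℝ, v = variance (Z 0) P := ⟨_, rfl⟩
  have hvnn : 0 ≤ v := hvdef ▸ variance_nonneg _ _
  have hveq : v = ∫ ω, (Z 0 ω - μ0)^2 ∂P := by
    rw [hvdef, variance_eq_integral (hmeas 0).aemeasurable, hμ0]
  by_cases hvz : v = 0
  · -- degenerate case: Z is a.s. constant
    have hz0 : ∀ᵐ ω ∂P, Z 0 ω = μ0 := by
      have hev : evariance (Z 0) P = 0 := by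
        rw [← hmem2.ofReal_variance_eq, ← hvdef, hvz, ENNReal.ofReal_zero]
      have := (evariance_eq_zero_iff (hmeas 0).aemeasurable).1 hev
      rw [← hμ0] at this
      exact this
    have hzi : ∀ i, ∀ᵐ ω ∂P, Z i ω = μ0 := by
      intro i
      have hpre : ∀ j, {ω | ¬ Z j ω = μ0} = Z j ⁻¹' ({μ0}ᶜ) := by
        intro j; ext ω; simp
      have h1 : P (Z i ⁻¹' ({μ0}ᶜ)) = P (Z 0 ⁻¹' ({μ0}ᶜ)) :=
        (hident i).measure_mem_eq (measurableSet_singleton μ0).compl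
      have h0 : P (Z 0 ⁻¹' ({μ0}ᶜ)) = 0 := by
        rw [← hpre 0]
        exact ae_iff.1 hz0
      rw [ae_iff, hpre i, h1, h0]
    have hall : ∀ᵐ ω ∂P, ∀ i, Z i ω = μ0 := ae_all_iff.2 hzi
    have htgt : ∀ᵐ ω ∂P, ω ∈ {ω | |empMean Z m ω - μ0| ≤
        Real.sqrt (2 * empVar Z m ω * L / m) + 3 * (b - a) * L / m} := by
      filter_upwards [hall] with ω hω
      have hmean : empMean Z m ω = μ0 := by
        simp only [empMean]
        rw [Finset.sum_congr rfl (fun i _ => hω i), Finset.sum_const, Finset.card_range,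
          nsmul_eq_mul]
        field_simp
      have hvar : empVar Z m ω = 0 := by
        simp only [empVar, hmean]
        have : ∀ i ∈ Finset.range m, (Z i ω - μ0)^2 = 0 := by
          intro i _; rw [hω i]; ring
        rw [Finset.sum_congr rfl this, Finset.sum_const]
        simp
      simp only [Set.mem_setOf_eq, hmean, hvar, sub_self, abs_zero]
      have h1 : 2 * (0:ℝ) * L / m = 0 := by ring
      rw [h1, Real.sqrt_zero]
      positivity
    have h0 : P {ω | ω ∉ {ω | |empMean Z m ω - μ0| ≤
        Real.sqrt (2 * empVar Z m ω * L / m) + 3 * (b - a) * L / m}} = 0 := ae_iff.1 htgt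
    have hone : (1:ENNReal) ≤ P {ω | |empMean Z m ω - μ0| ≤
        Real.sqrt (2 * empVar Z m ω * L / m) + 3 * (b - a) * L / m} := by
      set T := {ω | |empMean Z m ω - μ0| ≤
        Real.sqrt (2 * empVar Z m ω * L / m) + 3 * (b - a) * L / m}
      calc (1:ENNReal) = P Set.univ := measure_univ.symm
      _ ≤ P (T ∪ {ω | ω ∉ T}) := by
          apply measure_mono
          intro ω _
          by_cases h : ω ∈ T
          · exact Or.inl h
          · exact Or.inr h
      _ ≤ P T + P {ω | ω ∉ T} := measure_union_le _ _
      _ = P T := by rw [h0, add_zero]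
    refine le_trans ?_ hone
    exact ENNReal.ofReal_le_one.2 (by linarith)
  · -- main case
    have hvpos : 0 < v := lt_of_le_of_ne hvnn (Ne.symm hvz)
    have hba : 0 < b - a := by
      rcases lt_or_eq_of_le hba0 with h | h
      · exact h
      · exfalso
        apply hvz
        have hza : ∀ᵐ ω ∂P, Z 0 ω = μ0 := by
          filter_upwards [hbdd 0] with ω hω
          have h1 : a = b := by linarith
          have : Z 0 ω = a := le_antisymm (h1 ▸ hω.2) hω.1
          have h2 : a ≤ μ0 := hμ0a
          have h3 : μ0 ≤ b := hμ0b
          linarith [hω.1, hω.2]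
        rw [hveq]
        have : ∀ᵐ ω ∂P, (Z 0 ω - μ0)^2 = 0 := by
          filter_upwards [hza] with ω hω; rw [hω]; ring
        rw [integral_congr_ae this]
        simp
    -- Application 1 : upper tail of the mean
    have hv1 : ∫ ω, (Z 0 ω - ∫ ω', Z 0 ω' ∂P)^2 ∂P ≤ v := by
      rw [← hμ0]; exact le_of_eq hveq.symm
    have hM1 : ∀ᵐ ω ∂P, Z 0 ω - ∫ ω', Z 0 ω' ∂P ≤ b - a := by
      rw [← hμ0]
      filter_upwards [hbdd 0] with ω hω
      have := hω.2
      linarith [hμ0a]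
    have happ1 := bernstein_ineq P Z hmeas hindep hident a b hbdd v (b-a) hv1 hvpos hM1 hba
      m hm L hLpos
    rw [← hμ0] at happ1
    -- Application 2 : lower tail of the mean
    have hmeas2 : ∀ i, Measurable (fun ω => -Z i ω) := fun i => (hmeas i).neg
    have hindep2 : iIndepFun (fun i ω => -Z i ω) P :=
      hindep.comp (fun _ => fun y : ℝ => -y) (fun _ => measurable_neg)
    have hident2 : ∀ i, IdentDistrib (fun ω => -Z i ω) (fun ω => -Z 0 ω) P P :=
      fun i => (hident i).comp measurable_neg
    have hbdd2 : ∀ i, ∀ᵐ ω ∂P, (fun ω => -Z i ω) ω ∈ Set.Icc (-b) (-a) := by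
      intro i
      filter_upwards [hbdd i] with ω hω
      exact ⟨by simpa using neg_le_neg hω.2, by simpa using neg_le_neg hω.1⟩
    have hneg0 : (∫ ω', -Z 0 ω' ∂P) = -μ0 := by rw [integral_neg, hμ0]
    have hv2 : ∫ ω, (-Z 0 ω - ∫ ω', -Z 0 ω' ∂P)^2 ∂P ≤ v := by
      rw [hneg0]
      have he : (fun ω => (-Z 0 ω - -μ0)^2) = (fun ω => (Z 0 ω - μ0)^2) := by
        funext ω; ring
      calc ∫ ω, (-Z 0 ω - -μ0)^2 ∂P = ∫ ω, (Z 0 ω - μ0)^2 ∂P := by rw [he]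
      _ ≤ v := le_of_eq hveq.symm
    have hM2 : ∀ᵐ ω ∂P, (fun ω => -Z 0 ω) ω - ∫ ω', -Z 0 ω' ∂P ≤ b - a := by
      rw [hneg0]
      filter_upwards [hbdd 0] with ω hω
      show -Z 0 ω - -μ0 ≤ b - a
      linarith [hω.1, hμ0b]
    have happ2 := bernstein_ineq P (fun i ω => -Z i ω) hmeas2 hindep2 hident2 (-b) (-a) hbdd2
      v (b-a) hv2 hvpos hM2 hba m hm L hLpos
    -- Application 3 : lower tail of the second moment
    have hWmeas : Measurable (fun ω => (Z 0 ω - μ0)^2) := ((hmeas 0).sub_const μ0).pow_const 2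
    have hWbdd : ∀ᵐ ω ∂P, (Z 0 ω - μ0)^2 ∈ Set.Icc 0 ((b-a)^2) := by
      filter_upwards [hbdd 0] with ω hω
      constructor
      · positivity
      · nlinarith [hω.1, hω.2, hμ0a, hμ0b]
    have hWint : Integrable (fun ω => (Z 0 ω - μ0)^2) P := by
      refine integrable_of_ae_abs_le hWmeas.aestronglyMeasurable (C := (b-a)^2) ?_
      filter_upwards [hWbdd] with ω hω
      rw [abs_of_nonneg hω.1]; exact hω.2
    have hWmem : MemLp (fun ω => (Z 0 ω - μ0)^2) 2 P :=
      memLp_of_bounded hWbdd hWmeas.aestronglyMeasurable 2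
    have hmeas3 : ∀ i, Measurable (fun ω => -((Z i ω - μ0)^2)) :=
      fun i => (((hmeas i).sub_const μ0).pow_const 2).neg
    have hindep3 : iIndepFun (fun i ω => -((Z i ω - μ0)^2)) P :=
      hindep.comp (fun _ => fun y : ℝ => -((y - μ0)^2))
        (fun _ => ((measurable_id.sub_const μ0).pow_const 2).neg)
    have hident3 : ∀ i, IdentDistrib (fun ω => -((Z i ω - μ0)^2))
        (fun ω => -((Z 0 ω - μ0)^2)) P P :=
      fun i => (hident i).comp (((measurable_id.sub_const μ0).pow_const 2).neg)
    have hbdd3 : ∀ i, ∀ᵐ ω ∂P, (fun ω => -((Z i ω - μ0)^2)) ω ∈ Set.Icc (-((b-a)^2)) 0 := by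
      intro i
      filter_upwards [hbdd i] with ω hω
      constructor
      · simp only [neg_le_neg_iff]
        nlinarith [hω.1, hω.2, hμ0a, hμ0b]
      · simp only [Left.neg_nonpos_iff]
        positivity
    have hW0 : (∫ ω', -((Z 0 ω' - μ0)^2) ∂P) = -v := by
      rw [integral_neg, ← hveq]
    have hv3 : ∫ ω, (-((Z 0 ω - μ0)^2) - ∫ ω', -((Z 0 ω' - μ0)^2) ∂P)^2 ∂P ≤ (b-a)^2*v := by
      rw [hW0]
      have he : (fun ω => (-((Z 0 ω - μ0)^2) - -v)^2) = (fun ω => ((Z 0 ω - μ0)^2 - v)^2) := by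
        funext ω; ring
      have hvarW : variance (fun ω => (Z 0 ω - μ0)^2) P
          = ∫ ω, ((Z 0 ω - μ0)^2 - v)^2 ∂P := by
        rw [variance_eq_integral hWmeas.aemeasurable, ← hveq]
      have hint4 : Integrable (fun ω => ((Z 0 ω - μ0)^2)^2) P := by
        refine integrable_of_ae_abs_le (hWmeas.pow_const 2).aestronglyMeasurable
          (C := ((b-a)^2)^2) ?_
        filter_upwards [hWbdd] with ω hω
        rw [abs_of_nonneg (by positivity)]
        have h0 := hω.1
        nlinarith [hω.2]
      calc ∫ ω, (-((Z 0 ω - μ0)^2) - -v)^2 ∂P = ∫ ω, ((Z 0 ω - μ0)^2 - v)^2 ∂P := by rw [he]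
      _ = variance (fun ω => (Z 0 ω - μ0)^2) P := hvarW.symm
      _ ≤ ∫ ω, ((Z 0 ω - μ0)^2)^2 ∂P := by
          have h := variance_le_expectation_sq (μ := P)
            (X := fun ω => (Z 0 ω - μ0)^2) hWmeas.aestronglyMeasurable
          refine le_trans h (le_of_eq ?_)
          exact integral_congr_ae (ae_of_all _ (fun ω => by simp [Pi.pow_apply]))
      _ ≤ ∫ ω, (b-a)^2 * (Z 0 ω - μ0)^2 ∂P := by
          apply integral_mono_ae hint4 (hWint.const_mul ((b-a)^2))
          filter_upwards [hWbdd] with ω hω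
          nlinarith [hω.1, hω.2]
      _ = (b-a)^2*v := by rw [integral_const_mul, ← hveq]
    have hM3 : ∀ᵐ ω ∂P, (fun ω => -((Z 0 ω - μ0)^2)) ω - ∫ ω', -((Z 0 ω' - μ0)^2) ∂P ≤ v := by
      rw [hW0]
      refine ae_of_all _ (fun ω => ?_)
      show -((Z 0 ω - μ0)^2) - -v ≤ v
      nlinarith [sq_nonneg (Z 0 ω - μ0)]
    have happ3 := bernstein_ineq P (fun i ω => -((Z i ω - μ0)^2)) hmeas3 hindep3 hident3
      (-((b-a)^2)) 0 hbdd3 ((b-a)^2*v) v hv3 (by positivity) hM3 hvpos m hm L hLpos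
    -- the three bad events
    set B1 : Set Ω := {ω | Real.sqrt (2*v*(L/m)) + (b-a)*(L/m)/3
        ≤ (∑ i ∈ Finset.range m, Z i ω)/m - μ0} with hB1def
    set B2 : Set Ω := {ω | Real.sqrt (2*v*(L/m)) + (b-a)*(L/m)/3
        ≤ μ0 - (∑ i ∈ Finset.range m, Z i ω)/m} with hB2def
    set B3 : Set Ω := {ω | Real.sqrt (2*((b-a)^2*v)*(L/m)) + v*(L/m)/3
        ≤ v - (∑ i ∈ Finset.range m, (Z i ω - μ0)^2)/m} with hB3def
    have hPB1 : P B1 ≤ ENNReal.ofReal (x/3) := by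
      rw [← hexp3]; exact happ1
    have hPB2 : P B2 ≤ ENNReal.ofReal (x/3) := by
      rw [← hexp3]
      refine le_trans (measure_mono ?_) happ2
      intro ω hω
      rw [hB2def, Set.mem_setOf_eq] at hω
      show Real.sqrt (2*v*(L/m)) + (b-a)*(L/m)/3
        ≤ (∑ i ∈ Finset.range m, -Z i ω)/m - ∫ ω', -Z 0 ω' ∂P
      rw [hneg0, Finset.sum_neg_distrib, neg_div]
      linarith
    have hPB3 : P B3 ≤ ENNReal.ofReal (x/3) := by
      rw [← hexp3]
      refine le_trans (measure_mono ?_) happ3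
      intro ω hω
      rw [hB3def, Set.mem_setOf_eq] at hω
      show Real.sqrt (2*((b-a)^2*v)*(L/m)) + v*(L/m)/3
        ≤ (∑ i ∈ Finset.range m, -((Z i ω - μ0)^2))/m - ∫ ω', -((Z 0 ω' - μ0)^2) ∂P
      rw [hW0, Finset.sum_neg_distrib, neg_div]
      linarith
    -- measurability
    have hsummeas : Measurable (fun ω => (∑ i ∈ Finset.range m, Z i ω)/(m:ℝ)) :=
      (Finset.measurable_sum _ (fun i _ => hmeas i)).div_const _
    have hB1m : MeasurableSet B1 :=
      measurableSet_le measurable_const (hsummeas.sub_const μ0)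
    have hB2m : MeasurableSet B2 :=
      measurableSet_le measurable_const (measurable_const.sub hsummeas)
    have hB3m : MeasurableSet B3 := by
      refine measurableSet_le measurable_const (measurable_const.sub ?_)
      exact (Finset.measurable_sum _
        (fun i _ => ((hmeas i).sub_const μ0).pow_const 2)).div_const _
    -- the good event is contained in the target event
    have hsubset : B1ᶜ ∩ (B2ᶜ ∩ B3ᶜ) ⊆ {ω | |empMean Z m ω - μ0| ≤
        Real.sqrt (2 * empVar Z m ω * L / m) + 3 * (b - a) * L / m} := by
      rintro ω ⟨h1, h2, h3⟩
      rw [Set.mem_compl_iff, hB1def, Set.mem_setOf_eq, not_le] at h1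
      rw [Set.mem_compl_iff, hB2def, Set.mem_setOf_eq, not_le] at h2
      rw [Set.mem_compl_iff, hB3def, Set.mem_setOf_eq, not_le] at h3
      rw [Set.mem_setOf_eq]
      have hEM : empMean Z m ω = (∑ i ∈ Finset.range m, Z i ω)/m := rfl
      have habs : |empMean Z m ω - μ0| ≤ Real.sqrt (2*v*(L/m)) + (b-a)*(L/m)/3 := by
        rw [hEM]
        exact (abs_sub_lt_iff.2 ⟨h1, h2⟩).le
      have hid : empVar Z m ω = (∑ i ∈ Finset.range m, (Z i ω - μ0)^2)/(m:ℝ)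
          - (empMean Z m ω - μ0)^2 := by
        simp only [empVar, empMean]
        exact sum_sq_identity m hm (fun i => Z i ω) μ0
      have hV0 : 0 ≤ empVar Z m ω := by
        simp only [empVar]
        exact div_nonneg (Finset.sum_nonneg (fun i _ => sq_nonneg _)) (Nat.cast_nonneg m)
      have hsq : |empMean Z m ω - μ0|^2 = (empMean Z m ω - μ0)^2 := sq_abs _
      have hVlow : v - Real.sqrt (2*((b-a)^2*v)*(L/m)) - v*(L/m)/3
          - |empMean Z m ω - μ0|^2 ≤ empVar Z m ω := by
        rw [hsq, hid]
        linarith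
      have hr : (0:ℝ) < L/m := div_pos hLpos hmpos
      have hvc : v ≤ ((b-a)/2)^2 := by
        rw [hvdef]
        exact variance_le_sq_of_bounded (hbdd 0) (hmeas 0).aemeasurable
      have hfin := final_algebra (b-a) v (empVar Z m ω) (|empMean Z m ω - μ0|) (L/m)
        hba hvpos hr hvc hV0 (abs_nonneg _) habs hVlow
      have e7 : 2 * empVar Z m ω * L / (m:ℝ) = 2 * empVar Z m ω * (L/m) := by ring
      have e8 : 3 * (b-a) * L / (m:ℝ) = 3 * (b-a) * (L/m) := by ring
      rw [e7, e8]
      exact hfin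
    -- measure bookkeeping
    have hGm : MeasurableSet (B1ᶜ ∩ (B2ᶜ ∩ B3ᶜ)) :=
      hB1m.compl.inter (hB2m.compl.inter hB3m.compl)
    have hGc : P (B1ᶜ ∩ (B2ᶜ ∩ B3ᶜ))ᶜ ≤ ENNReal.ofReal x := by
      have hunion : (B1ᶜ ∩ (B2ᶜ ∩ B3ᶜ))ᶜ = B1 ∪ (B2 ∪ B3) := by
        rw [Set.compl_inter, Set.compl_inter, compl_compl, compl_compl, compl_compl]
      rw [hunion]
      calc P (B1 ∪ (B2 ∪ B3)) ≤ P B1 + P (B2 ∪ B3) := measure_union_le _ _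
      _ ≤ P B1 + (P B2 + P B3) := add_le_add_right (measure_union_le _ _) _
      _ ≤ ENNReal.ofReal (x/3) + (ENNReal.ofReal (x/3) + ENNReal.ofReal (x/3)) := by
          gcongr
      _ = ENNReal.ofReal x := by
          rw [← ENNReal.ofReal_add (by positivity) (by positivity),
            ← ENNReal.ofReal_add (by positivity) (by positivity)]
          congr 1
          ring
    calc ENNReal.ofReal (1-x) = 1 - ENNReal.ofReal x := by
          rw [ENNReal.ofReal_sub _ hx0.le, ENNReal.ofReal_one]
    _ ≤ 1 - P (B1ᶜ ∩ (B2ᶜ ∩ B3ᶜ))ᶜ := tsub_le_tsub_left hGc 1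
    _ = P (B1ᶜ ∩ (B2ᶜ ∩ B3ᶜ)) := by
          have h := prob_compl_eq_one_sub (μ := P) hGm.compl
          rw [compl_compl] at h
          exact h.symm
    _ ≤ P {ω | |empMean Z m ω - μ0| ≤
          Real.sqrt (2 * empVar Z m ω * L / m) + 3 * (b - a) * L / m} :=
        measure_mono hsubset


end Main
end

section
/- Let ε ∈ (0,1) and let z̄, μ, c be real numbers with c ≥ 0. If |z̄ - μ| ≤ c and c ≤ ε |z̄|, then the quantity ê = z̄ - ε · sign(z̄) · c satisfies |ê - μ| ≤ ε |μ|. -/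
/-- sign(t) = 1 if t ≥ 0 and -1 if t < 0. -/
noncomputable def sign' (t : ℝ) : ℝ := if 0 ≤ t then 1 else -1

/-- deterministic core of the relative-precision guarantee. -/
theorem stmt_2 (ε zbar μ c : ℝ) (hε : ε ∈ Set.Ioo (0 : ℝ) 1) (hc : 0 ≤ c)
    (h1 : |zbar - μ| ≤ c) (h2 : c ≤ ε * |zbar|) :
    |(zbar - ε * sign' zbar * c) - μ| ≤ ε * |μ| := by
  obtain ⟨hε0, hε1⟩ := hε
  rw [abs_le] at h1
  rcases le_or_gt 0 zbar with h | h
  · rw [abs_of_nonneg h] at h2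
    have hμ : 0 ≤ μ := by nlinarith
    simp only [sign', if_pos h]
    rw [abs_of_nonneg hμ, abs_le]
    constructor <;> nlinarith
  · rw [abs_of_neg h] at h2
    have hμ : μ ≤ 0 := by nlinarith
    simp only [sign', if_neg (not_le.mpr h)]
    rw [abs_of_nonpos hμ, abs_le]
    constructor <;> nlinarith
end

section
/- Let 0 < δ ≤ 3/4, ε ∈ (0,1), p > 1 and c = (p-1)/p, and let Z be a random variable taking values in [a,b] with mean μ = E[Z] ≠ 0 and variance σ² = V[Z]. With d_m = δ c m^{-p}, define M = min{ m ≥ 1 : c_m ≤ ε |Z̄_m| }. Then, with ν = min( max(σ², ε²μ²)/(b-a)² , ε²μ² / ((1+ε)² max(σ², ε²μ²) γ) ) where γ = (sqrt(2 + 2√2 + 2/3) + 3)², one has P( M > ⌈ (2/ν)( p log(2p/ν) + log(3/(cδ)) ) ⌉ ) ≤ 4δ/3. -/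
open MeasureTheory ProbabilityTheory

/-- Half-length `c_m = sqrt(2 V̄_m log(3/d_m)/m) + 3(b-a) log(3/d_m)/m` of the
confidence interval of level `1 - d_m`. -/
noncomputable def confRad {Ω : Type*} (a b : ℝ) (d : ℕ → ℝ) (Z : ℕ → Ω → ℝ)
    (m : ℕ) (ω : Ω) : ℝ :=
  Real.sqrt (2 * empVar Z m ω * Real.log (3 / d m) / m)
    + 3 * (b - a) * Real.log (3 / d m) / m

/-- The stopping "time" `M = min{ m ≥ 1 : c_m ≤ ε |Z̄_m| }`. -/
noncomputable def Mstop {Ω : Type*} (a b : ℝ) (d : ℕ → ℝ) (Z : ℕ → Ω → ℝ)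
    (ε : ℝ) (ω : Ω) : ℕ :=
  sInf {m : ℕ | 1 ≤ m ∧ confRad a b d Z m ω ≤ ε * |empMean Z m ω|}

section Auxiliary

open Real


lemma exp_taylor4 {x u : ℝ} (hx : |x| ≤ u) (hu : u ≤ 1) :
    Real.exp x ≤ 1 + x + x ^ 2 * (1/2 + u/6 + 5*u^2/96) := by
  have h4 := Real.exp_bound (x := x) (le_trans hx hu) (n := 4) (by norm_num)
  have hs : ∑ m ∈ Finset.range 4, x ^ m / m.factorial = 1 + x + x^2/2 + x^3/6 := by
    simp [Finset.sum_range_succ, Nat.factorial]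
  rw [hs] at h4
  have habs : |x| ^ 4 * (((4:ℕ).succ : ℝ) / (((4:ℕ).factorial : ℝ) * (4:ℕ))) = x^4 * (5/96) := by
    rw [← abs_pow, abs_of_nonneg (by positivity)]
    norm_num [Nat.factorial]
  rw [habs] at h4
  have hx2 : x^2 ≤ u^2 := by
    have := abs_nonneg x
    nlinarith [sq_abs x]
  have h1 : x^3 ≤ x^2 * u := by
    nlinarith [abs_nonneg x, sq_abs x, le_abs_self x, neg_abs_le x]
  have h2 : x^4 ≤ x^2 * u^2 := by nlinarith [sq_nonneg x]
  have := abs_le.mp h4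
  nlinarith [this.2]

lemma integrable_of_abs_le {Ω : Type*} {mΩ : MeasurableSpace Ω} {P : Measure Ω}
    [IsProbabilityMeasure P] {X : Ω → ℝ} (hX : AEStronglyMeasurable X P) {C : ℝ}
    (h : ∀ᵐ ω ∂P, |X ω| ≤ C) : Integrable X P := by
  refine Integrable.mono' (integrable_const C) hX ?_
  filter_upwards [h] with ω hω
  simpa using hω

lemma mgf_le_of_bounded {Ω : Type*} {mΩ : MeasurableSpace Ω} (P : Measure Ω)
    [IsProbabilityMeasure P] (X : Ω → ℝ) (hX : Measurable X) (b₀ v t : ℝ)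
    (ht : 0 ≤ t) (hu : t * b₀ ≤ 1)
    (hbdd : ∀ᵐ ω ∂P, |X ω| ≤ b₀) (hmean : ∫ ω, X ω ∂P = 0)
    (hvar : ∫ ω, (X ω)^2 ∂P ≤ v) :
    mgf X P t ≤ Real.exp (v * t^2 * (1/2 + t*b₀/6 + 5*(t*b₀)^2/96)) := by
  set κ := 1/2 + t*b₀/6 + 5*(t*b₀)^2/96 with hκdef
  have hb0 : 0 ≤ b₀ := le_trans (abs_nonneg _) hbdd.exists.choose_spec
  have hκ : 0 ≤ κ := by positivity
  have hintX : Integrable X P := integrable_of_abs_le hX.aestronglyMeasurable hbdd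
  have hintX2 : Integrable (fun ω => (X ω)^2) P := by
    refine integrable_of_abs_le (hX.pow_const 2).aestronglyMeasurable
      (C := b₀^2) ?_
    filter_upwards [hbdd] with ω hω
    rw [abs_pow]
    exact pow_le_pow_left₀ (abs_nonneg _) hω 2
  have hintexp : Integrable (fun ω => Real.exp (t * X ω)) P := by
    refine integrable_of_abs_le ((hX.const_mul t).exp).aestronglyMeasurable
      (C := Real.exp (t * b₀)) ?_
    filter_upwards [hbdd] with ω hω
    rw [abs_of_nonneg (Real.exp_nonneg _)]
    exact Real.exp_le_exp.mpr (by nlinarith [le_abs_self (X ω), abs_nonneg (X ω)])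
  have hpt : ∀ᵐ ω ∂P, Real.exp (t * X ω) ≤ 1 + t * X ω + (t * X ω)^2 * κ := by
    filter_upwards [hbdd] with ω hω
    refine exp_taylor4 ?_ hu
    rw [abs_mul, abs_of_nonneg ht]
    exact mul_le_mul_of_nonneg_left hω ht
  have hmono : mgf X P t ≤ ∫ ω, (1 + t * X ω + (t * X ω)^2 * κ) ∂P := by
    refine integral_mono_ae hintexp ?_ hpt
    have : Integrable (fun ω => 1 + t * X ω) P :=
      (integrable_const 1).add (hintX.const_mul t)
    refine this.add ?_
    have : (fun ω => (t * X ω)^2 * κ) = fun ω => (t^2 * κ) * (X ω)^2 := by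
      ext ω; ring
    rw [this]
    exact hintX2.const_mul _
  have hi1 : Integrable (fun ω => 1 + t * X ω) P :=
    (integrable_const 1).add (hintX.const_mul t)
  have hi2 : Integrable (fun ω => (t^2 * κ) * (X ω)^2) P := hintX2.const_mul _
  have hcalc : ∫ ω, (1 + t * X ω + (t * X ω)^2 * κ) ∂P
      = 1 + (t^2 * κ) * ∫ ω, (X ω)^2 ∂P := by
    have heq : (fun ω => 1 + t * X ω + (t * X ω)^2 * κ)
        = fun ω => (1 + t * X ω) + (t^2 * κ) * (X ω)^2 := by ext ω; ring
    rw [heq, integral_add hi1 hi2,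
      integral_add (integrable_const 1) (hintX.const_mul t),
      integral_const, integral_const_mul, integral_const_mul, hmean]
    simp
  refine hmono.trans ?_
  rw [hcalc]
  have h1 : 1 + (t^2 * κ) * ∫ ω, (X ω)^2 ∂P ≤ 1 + v * t^2 * κ := by
    nlinarith [mul_le_mul_of_nonneg_left hvar (by positivity : (0:ℝ) ≤ t^2 * κ)]
  refine h1.trans ?_
  have := Real.add_one_le_exp (v * t^2 * κ)
  linarith

set_option maxHeartbeats 1000000 in
lemma bernstein_sum {Ω : Type*} {mΩ : MeasurableSpace Ω} (P : Measure Ω)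
    [IsProbabilityMeasure P] (X : ℕ → Ω → ℝ) (hmeas : ∀ i, Measurable (X i))
    (hind : iIndepFun X P) (b₀ v L : ℝ) (m : ℕ)
    (hb : 0 < b₀) (hv : 0 < v) (hL : 0 < L) (hm : 1 ≤ m)
    (hs : 2 * L * b₀^2 ≤ m * v)
    (hbdd : ∀ i, ∀ᵐ ω ∂P, |X i ω| ≤ b₀)
    (hmean : ∀ i, ∫ ω, X i ω ∂P = 0)
    (hvar : ∀ i, ∫ ω, (X i ω)^2 ∂P ≤ v) :
    P {ω | Real.sqrt (2*v*m*L) + b₀*L/3 ≤ ∑ i ∈ Finset.range m, X i ω}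
      ≤ ENNReal.ofReal (Real.exp (-L)) := by
  have hm0 : (0:ℝ) < m := by exact_mod_cast hm
  have hmv : (0:ℝ) < m * v := by positivity
  obtain ⟨s, hsdef⟩ : ∃ s : ℝ, s = b₀ * Real.sqrt (2*L/(m*v)) / 3 := ⟨_, rfl⟩
  have hsq : Real.sqrt (2*L/(m*v)) ^ 2 = 2*L/(m*v) := Real.sq_sqrt (by positivity)
  have hs0 : 0 < s := by
    have : 0 < Real.sqrt (2*L/(m*v)) := Real.sqrt_pos.mpr (by positivity)
    rw [hsdef]; positivity
  have hs2 : 9 * ((m:ℝ) * v) * s^2 = 2 * L * b₀^2 := by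
    rw [hsdef, div_pow, mul_pow, hsq]
    field_simp
    ring
  have hs9 : s^2 ≤ 1/9 := by nlinarith
  have hs13 : s ≤ 1/3 := by nlinarith
  obtain ⟨t, htdef⟩ : ∃ t : ℝ, t = 3*s/((1+s)*b₀) := ⟨_, rfl⟩
  have h1s : (0:ℝ) < 1 + s := by linarith
  have ht0 : 0 ≤ t := by rw [htdef]; positivity
  have hub : t * b₀ = 3*s/(1+s) := by rw [htdef]; field_simp
  have hu1 : t * b₀ ≤ 1 := by rw [hub, div_le_one (by positivity)]; linarith
  have hsqrt : Real.sqrt (2*v*m*L) = 3*((m:ℝ)*v)*s/b₀ := by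
    rw [show 2*v*(m:ℝ)*L = (3*((m:ℝ)*v)*s/b₀)^2 by field_simp; nlinarith [hs2]]
    exact Real.sqrt_sq (by positivity)
  obtain ⟨T, hTdef⟩ : ∃ T : ℝ, T = Real.sqrt (2*v*m*L) + b₀*L/3 := ⟨_, rfl⟩
  obtain ⟨F, hFdef⟩ : ∃ F : Ω → ℝ, F = fun ω => ∑ i ∈ Finset.range m, X i ω := ⟨_, rfl⟩
  have hFsum : F = ∑ i ∈ Finset.range m, X i := by
    rw [hFdef]; ext ω; simp
  have hFmeas : Measurable F := by
    rw [hFdef]; exact Finset.measurable_sum _ fun i _ => hmeas i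
  have hintexp : Integrable (fun ω => Real.exp (t * F ω)) P := by
    refine integrable_of_abs_le ((hFmeas.const_mul t).exp).aestronglyMeasurable
      (C := Real.exp (t * (m * b₀))) ?_
    have hall : ∀ᵐ ω ∂P, ∀ i, |X i ω| ≤ b₀ := ae_all_iff.mpr hbdd
    filter_upwards [hall] with ω hω
    rw [abs_of_nonneg (Real.exp_nonneg _)]
    refine Real.exp_le_exp.mpr (mul_le_mul_of_nonneg_left ?_ ht0)
    rw [hFdef]
    calc ∑ i ∈ Finset.range m, X i ω
        ≤ ∑ i ∈ Finset.range m, b₀ :=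
          Finset.sum_le_sum fun i _ => le_trans (le_abs_self _) (hω i)
      _ = m * b₀ := by simp [mul_comm]
  have hcher : (P {ω | T ≤ F ω}).toReal ≤ Real.exp (-t * T) * mgf F P t :=
    measure_ge_le_exp_mul_mgf T ht0 hintexp
  have hmgf : mgf F P t ≤ Real.exp (m * (v * t^2 * (1/2 + t*b₀/6 + 5*(t*b₀)^2/96))) := by
    rw [hFsum, hind.mgf_sum hmeas]
    calc ∏ i ∈ Finset.range m, mgf (X i) P t
        ≤ ∏ _i ∈ Finset.range m, Real.exp (v * t^2 * (1/2 + t*b₀/6 + 5*(t*b₀)^2/96)) :=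
          Finset.prod_le_prod (fun i _ => mgf_nonneg) fun i _ =>
            mgf_le_of_bounded P (X i) (hmeas i) b₀ v t ht0 hu1 (hbdd i) (hmean i) (hvar i)
      _ = Real.exp (m * (v * t^2 * (1/2 + t*b₀/6 + 5*(t*b₀)^2/96))) := by
          rw [Finset.prod_const, ← Real.exp_nat_mul]
          simp
  have hexp : Real.exp (-t * T) * Real.exp (m * (v * t^2 * (1/2 + t*b₀/6 + 5*(t*b₀)^2/96)))
      ≤ Real.exp (-L) := by
    rw [← Real.exp_add, Real.exp_le_exp]
    have htT : t * T = (2*L + s*L)/(1+s) := by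
      rw [hTdef, hsqrt, htdef]
      field_simp
      nlinarith [hs2]
    have hmvt : (m:ℝ) * (v * t^2) = 2*L/(1+s)^2 := by
      rw [htdef]
      field_simp
      nlinarith [hs2]
    have key : (m:ℝ) * (v * t^2 * (1/2 + t*b₀/6 + 5*(t*b₀)^2/96))
        = (2*L/(1+s)^2) * (1/2 + (3*s/(1+s))/6 + 5*(3*s/(1+s))^2/96) := by
      rw [← hmvt, ← hub]; ring
    rw [key, neg_mul, htT]
    have hineq : (2*L/(1+s)^2) * (1/2 + (3*s/(1+s))/6 + 5*(3*s/(1+s))^2/96)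
        ≤ (2*L + s*L)/(1+s) - L := by
      rw [div_pow, div_sub' (ne_of_gt h1s)]
      have e1 : 1/2 + (3*s/(1+s))/6 + 5*((3*s)^2/(1+s)^2)/96
          = (48*(1+s)^2 + 48*s*(1+s) + 45*s^2) / (96*(1+s)^2) := by
        field_simp; ring
      rw [e1, div_mul_div_comm, div_le_div_iff₀ (by positivity) h1s]
      nlinarith [mul_pos hL hs0, mul_pos (mul_pos hL hs0) hs0,
        mul_nonneg (mul_nonneg hL.le hs0.le) (sq_nonneg s)]
    linarith
  have hfin : (P {ω | T ≤ F ω}).toReal ≤ Real.exp (-L) :=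
    hcher.trans (le_trans (mul_le_mul_of_nonneg_left hmgf (Real.exp_nonneg _)) hexp)
  have hsetrw : {ω | Real.sqrt (2*v*m*L) + b₀*L/3 ≤ ∑ i ∈ Finset.range m, X i ω}
      = {ω | T ≤ F ω} := by
    rw [hTdef, hFdef]
  rw [hsetrw, ← ENNReal.ofReal_toReal (measure_ne_top P {ω | T ≤ F ω})]
  exact ENNReal.ofReal_le_ofReal hfin

set_option maxHeartbeats 1000000 in
lemma det_main {Ω : Type*} (Z : ℕ → Ω → ℝ) (ω : Ω) (a b μ σ2 ε ν v R L₀ sqγ : ℝ)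
    (d : ℕ → ℝ) (m : ℕ)
    (hm : 1 ≤ m)
    (hR : R = b - a) (hRpos : 0 < R)
    (hσ2 : 0 ≤ σ2) (hσ2v : σ2 ≤ v) (hvpos : 0 < v)
    (hε : 0 < ε) (hε1 : ε ≤ 1)
    (hν0 : 0 < ν)
    (hν1 : R^2 * ν ≤ v)
    (hA : Real.sqrt (v * ν) ≤ ε * |μ| / ((1+ε) * sqγ))
    (hB : R * ν ≤ ε * |μ| / ((1+ε) * sqγ))
    (h13 : Real.sqrt (13/3) + 3 ≤ sqγ) (h3γ : 3 ≤ sqγ)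
    (hL₀ : 0 < L₀) (hLf : L₀ ≤ Real.log (3 / d m))
    (hK1 : 2 * L₀ ≤ m * ν)
    (hK2 : Real.log (3 / d m) ≤ m * ν)
    (hE1 : ∑ i ∈ Finset.range m, (Z i ω - μ) < Real.sqrt (2*v*m*L₀) + R*L₀/3)
    (hE2 : ∑ i ∈ Finset.range m, (μ - Z i ω) < Real.sqrt (2*v*m*L₀) + R*L₀/3)
    (hE3 : ∑ i ∈ Finset.range m, ((Z i ω - μ)^2 - σ2)
        < Real.sqrt (2*(R^2*v)*m*L₀) + R^2*L₀/3) :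
    confRad a b d Z m ω ≤ ε * |empMean Z m ω| := by
  have hm0 : (0:ℝ) < m := by exact_mod_cast hm
  obtain ⟨Lf, hLfdef⟩ : ∃ x : ℝ, x = Real.log (3 / d m) := ⟨_, rfl⟩
  rw [← hLfdef] at hLf hK2
  have hLf0 : 0 < Lf := lt_of_lt_of_le hL₀ hLf
  obtain ⟨B1, hB1def⟩ : ∃ x : ℝ, x = Real.sqrt (v * ν) := ⟨_, rfl⟩
  obtain ⟨B2, hB2def⟩ : ∃ x : ℝ, x = R * ν := ⟨_, rfl⟩
  rw [← hB1def] at hA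
  rw [← hB2def] at hB
  have hB10 : 0 ≤ B1 := hB1def ▸ Real.sqrt_nonneg _
  have hB20 : 0 ≤ B2 := by rw [hB2def]; positivity
  have hB1sq : B1^2 = v * ν := by rw [hB1def]; exact Real.sq_sqrt (by positivity)
  -- bound on sqrt terms
  have hsq1 : Real.sqrt (2*v*m*L₀) ≤ m * B1 := by
    have h0 := mul_le_mul_of_nonneg_left hK1 (by positivity : (0:ℝ) ≤ v * m)
    have h1 : 2*v*(m:ℝ)*L₀ ≤ (m:ℝ)^2 * (v * ν) := by
      calc 2*v*(m:ℝ)*L₀ = v * m * (2 * L₀) := by ring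
        _ ≤ v * m * (m * ν) := h0
        _ = (m:ℝ)^2 * (v * ν) := by ring
    calc Real.sqrt (2*v*m*L₀) ≤ Real.sqrt ((m:ℝ)^2 * (v*ν)) := Real.sqrt_le_sqrt h1
      _ = m * B1 := by
          rw [hB1def, Real.sqrt_mul (by positivity), Real.sqrt_sq hm0.le]
  have hsq3 : Real.sqrt (2*(R^2*v)*m*L₀) ≤ m * (R * B1) := by
    have h0 := mul_le_mul_of_nonneg_left hK1 (by positivity : (0:ℝ) ≤ R^2 * v * m)
    have h1 : 2*(R^2*v)*(m:ℝ)*L₀ ≤ ((m:ℝ)*R)^2 * (v * ν) := by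
      calc 2*(R^2*v)*(m:ℝ)*L₀ = R^2 * v * m * (2 * L₀) := by ring
        _ ≤ R^2 * v * m * (m * ν) := h0
        _ = ((m:ℝ)*R)^2 * (v * ν) := by ring
    calc Real.sqrt (2*(R^2*v)*m*L₀) ≤ Real.sqrt (((m:ℝ)*R)^2 * (v*ν)) :=
          Real.sqrt_le_sqrt h1
      _ = m * (R * B1) := by
          rw [hB1def, Real.sqrt_mul (by positivity), Real.sqrt_sq (by positivity)]
          ring
  have hRL : R*L₀/3 ≤ m * (B2/6) := by
    have h0 := mul_le_mul_of_nonneg_left hK1 (by positivity : (0:ℝ) ≤ R)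
    calc R*L₀/3 = (R * (2*L₀))/6 := by ring
      _ ≤ (R * (m*ν))/6 := by linarith
      _ = m * (B2/6) := by rw [hB2def]; ring
  have hR2L : R^2*L₀/3 ≤ m * (R*B2/6) := by
    have h0 := mul_le_mul_of_nonneg_left hK1 (by positivity : (0:ℝ) ≤ R^2)
    calc R^2*L₀/3 = (R^2 * (2*L₀))/6 := by ring
      _ ≤ (R^2 * (m*ν))/6 := by linarith
      _ = m * (R*B2/6) := by rw [hB2def]; ring
  -- empirical mean deviation
  obtain ⟨Zb, hZbdef⟩ : ∃ x : ℝ, x = empMean Z m ω := ⟨_, rfl⟩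
  have hsum : ∑ i ∈ Finset.range m, (Z i ω - μ) = m * (Zb - μ) := by
    rw [hZbdef, empMean, Finset.sum_sub_distrib, Finset.sum_const, Finset.card_range]
    field_simp
    simp [nsmul_eq_mul]
  have hsum2 : ∑ i ∈ Finset.range m, (μ - Z i ω) = -(m * (Zb - μ)) := by
    rw [← hsum, ← Finset.sum_neg_distrib]
    exact Finset.sum_congr rfl fun i _ => by ring
  rw [hsum] at hE1
  rw [hsum2] at hE2
  have hdev : |Zb - μ| ≤ B1 + B2/6 := by
    rw [abs_le]
    constructor
    · by_contra hcon
      push_neg at hcon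
      have h2 := mul_le_mul_of_nonneg_left hcon.le hm0.le
      have he : (m:ℝ) * (-(B1 + B2/6)) = -((m:ℝ)*B1) - (m:ℝ)*(B2/6) := by ring
      linarith
    · by_contra hcon
      push_neg at hcon
      have h2 := mul_le_mul_of_nonneg_left hcon.le hm0.le
      have he : (m:ℝ) * (B1 + B2/6) = (m:ℝ)*B1 + (m:ℝ)*(B2/6) := by ring
      linarith
  -- empirical variance bound
  have hvar_ineq : ∑ i ∈ Finset.range m, (Z i ω - Zb)^2
      ≤ ∑ i ∈ Finset.range m, (Z i ω - μ)^2 := by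
    have expand : ∀ i, (Z i ω - Zb)^2
        = ((Z i ω - μ)^2 - 2*(Zb - μ)*(Z i ω - μ)) + (Zb-μ)^2 := by
      intro i; ring
    have hs' : ∑ i ∈ Finset.range m, (Z i ω - μ) = m * (Zb - μ) := hsum
    calc ∑ i ∈ Finset.range m, (Z i ω - Zb)^2
        = ((∑ i ∈ Finset.range m, (Z i ω - μ)^2) - 2*(Zb-μ)*(m*(Zb-μ))) + m*(Zb-μ)^2 := by
          simp only [expand]
          rw [Finset.sum_add_distrib, Finset.sum_sub_distrib, ← Finset.mul_sum, hs',
            Finset.sum_const, Finset.card_range]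
          simp [nsmul_eq_mul]
      _ = (∑ i ∈ Finset.range m, (Z i ω - μ)^2) - m*(Zb-μ)^2 := by ring
      _ ≤ ∑ i ∈ Finset.range m, (Z i ω - μ)^2 := by
          linarith [mul_nonneg hm0.le (sq_nonneg (Zb - μ))]
  have hsumsq : ∑ i ∈ Finset.range m, (Z i ω - μ)^2 < m * σ2 + (m*(R*B1) + m*(R*B2/6)) := by
    have h := hE3
    rw [Finset.sum_sub_distrib, Finset.sum_const, Finset.card_range] at h
    simp only [nsmul_eq_mul] at h
    linarith [hsq3, hR2L]
  have hRB1 : R * B1 ≤ v := by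
    have h0 := mul_le_mul_of_nonneg_left hν1 hvpos.le
    have h1 : (R*B1)^2 ≤ v^2 := by
      rw [mul_pow, hB1sq]
      calc R^2 * (v*ν) = v * (R^2*ν) := by ring
        _ ≤ v * v := h0
        _ = v^2 := by ring
    calc R * B1 = Real.sqrt ((R*B1)^2) := (Real.sqrt_sq (by positivity)).symm
      _ ≤ Real.sqrt (v^2) := Real.sqrt_le_sqrt h1
      _ = v := Real.sqrt_sq hvpos.le
  have hRB2 : R * B2 ≤ v := by
    rw [hB2def, show R*(R*ν) = R^2*ν from by ring]
    exact hν1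
  have hVbar : empVar Z m ω ≤ 13 * v / 6 := by
    rw [empVar, ← hZbdef, div_le_iff₀ hm0]
    calc ∑ i ∈ Finset.range m, (Z i ω - Zb)^2
        ≤ ∑ i ∈ Finset.range m, (Z i ω - μ)^2 := hvar_ineq
      _ ≤ m * σ2 + (m*(R*B1) + m*(R*B2/6)) := hsumsq.le
      _ ≤ 13 * v / 6 * m := by
          have e1 : (m:ℝ)*σ2 ≤ m*v := mul_le_mul_of_nonneg_left hσ2v hm0.le
          have e2 : (m:ℝ)*(R*B1) ≤ m*v := mul_le_mul_of_nonneg_left hRB1 hm0.le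
          have e3 : (m:ℝ)*(R*B2/6) ≤ m*(v/6) :=
            mul_le_mul_of_nonneg_left (by linarith) hm0.le
          have e4 : (m:ℝ)*v + m*v + m*(v/6) = 13*v/6*m := by ring
          linarith
  have hV0 : 0 ≤ empVar Z m ω := by
    rw [empVar]
    positivity
  -- conclude
  have hconf1 : Real.sqrt (2 * empVar Z m ω * Lf / m) ≤ Real.sqrt (13/3) * B1 := by
    have h1 : 2 * empVar Z m ω * Lf / m ≤ (13/3) * (v * ν) := by
      rw [div_le_iff₀ hm0]
      calc 2 * empVar Z m ω * Lf ≤ 2 * (13*v/6) * Lf := by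
            apply mul_le_mul_of_nonneg_right _ hLf0.le
            linarith [hVbar]
        _ ≤ 2 * (13*v/6) * (m * ν) := by
            apply mul_le_mul_of_nonneg_left hK2 (by positivity)
        _ = 13/3 * (v*ν) * m := by ring
    calc Real.sqrt (2 * empVar Z m ω * Lf / m) ≤ Real.sqrt ((13/3) * (v*ν)) :=
          Real.sqrt_le_sqrt h1
      _ = Real.sqrt (13/3) * B1 := by rw [hB1def]; exact Real.sqrt_mul (by norm_num) _
  have hconf2 : 3 * R * Lf / m ≤ 3 * B2 := by
    rw [hB2def, div_le_iff₀ hm0]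
    have h0 := mul_le_mul_of_nonneg_left hK2 (by positivity : (0:ℝ) ≤ 3 * R)
    calc 3 * R * Lf = 3 * R * Lf := rfl
      _ ≤ 3 * R * (m * ν) := h0
      _ = 3 * (R * ν) * m := by ring
  obtain ⟨E, hEdef⟩ : ∃ x : ℝ, x = ε * |μ| / ((1+ε) * sqγ) := ⟨_, rfl⟩
  rw [← hEdef] at hA hB
  have hsqγ0 : 0 < sqγ := by linarith
  have hE0 : 0 ≤ E := by rw [hEdef]; positivity
  have hEmul : ((1+ε) * sqγ) * E = ε * |μ| := by
    rw [hEdef]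
    field_simp
  have habs : |μ| - (B1 + B2/6) ≤ |Zb| := by
    have h1 : |μ| - |Zb| ≤ |μ - Zb| := abs_sub_abs_le_abs_sub μ Zb
    have h2 : |μ - Zb| = |Zb - μ| := abs_sub_comm μ Zb
    linarith [hdev]
  have hmain : Real.sqrt (13/3) * B1 + 3 * B2 + ε * (B1 + B2/6) ≤ ε * |μ| := by
    have hs13 : 0 ≤ Real.sqrt (13/3) := Real.sqrt_nonneg _
    have e1 : Real.sqrt (13/3) * B1 ≤ Real.sqrt (13/3) * E :=
      mul_le_mul_of_nonneg_left hA hs13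
    have e2 : 3 * B2 ≤ 3 * E := by linarith
    have e3 : ε * B1 ≤ ε * E := mul_le_mul_of_nonneg_left hA hε.le
    have e5 : ε/6 * B2 ≤ ε/6 * E := mul_le_mul_of_nonneg_left hB (by positivity)
    have expand : (Real.sqrt (13/3) + 3 + 7*ε/6) * E
        = Real.sqrt (13/3) * E + 3 * E + ε * E + ε/6 * E := by ring
    have e6 : ε * (B1 + B2/6) = ε * B1 + ε/6 * B2 := by ring
    have step1 : Real.sqrt (13/3) * B1 + 3 * B2 + ε * (B1 + B2/6)
        ≤ (Real.sqrt (13/3) + 3 + 7*ε/6) * E := by linarith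
    have h7 : ε * 3 ≤ ε * sqγ := mul_le_mul_of_nonneg_left h3γ hε.le
    have hexp2 : (1+ε) * sqγ = sqγ + ε * sqγ := by ring
    have h : Real.sqrt (13/3) + 3 + 7*ε/6 ≤ (1+ε) * sqγ := by linarith
    have step2 : (Real.sqrt (13/3) + 3 + 7*ε/6) * E ≤ ((1+ε) * sqγ) * E :=
      mul_le_mul_of_nonneg_right h hE0
    linarith [hEmul]
  rw [confRad, ← hR, ← hLfdef]
  calc Real.sqrt (2 * empVar Z m ω * Lf / m) + 3 * R * Lf / m
      ≤ Real.sqrt (13/3) * B1 + 3 * B2 := add_le_add hconf1 hconf2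
    _ ≤ ε * |μ| - ε * (B1 + B2/6) := by linarith [hmain]
    _ ≤ ε * |Zb| := by
        have h0 := mul_le_mul_of_nonneg_left habs hε.le
        have he : ε * (|μ| - (B1 + B2/6)) = ε * |μ| - ε * (B1 + B2/6) := by ring
        linarith
    _ = ε * |empMean Z m ω| := by rw [hZbdef]


end Auxiliary

set_option maxHeartbeats 2000000 in
/-- complexity bound in probability for the stopping time of the
Monte-Carlo estimate with guaranteed relative precision. -/
theorem stmt_4 {Ω : Type*} {mΩ : MeasurableSpace Ω} (P : Measure Ω)
    [IsProbabilityMeasure P] (a b : ℝ) (hab : a < b) (Z : ℕ → Ω → ℝ)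
    (hmeas : ∀ i, Measurable (Z i))
    (hindep : iIndepFun Z P)
    (hident : ∀ i, IdentDistrib (Z i) (Z 0) P P)
    (hbdd : ∀ i, ∀ᵐ ω ∂P, Z i ω ∈ Set.Icc a b)
    (δ : ℝ) (hδ : 0 < δ) (hδ' : δ ≤ 3 / 4) (ε : ℝ) (hε : ε ∈ Set.Ioo (0 : ℝ) 1)
    (p c : ℝ) (hp : 1 < p) (hc : c = (p - 1) / p)
    (d : ℕ → ℝ) (hd : ∀ m : ℕ, 1 ≤ m → d m = δ * c * (m : ℝ) ^ (-p))
    (μ σ2 : ℝ) (hμ : μ = ∫ ω, Z 0 ω ∂P) (hμ0 : μ ≠ 0)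
    (hσ2 : σ2 = variance (Z 0) P)
    (γ ν : ℝ) (hγ : γ = (Real.sqrt (2 + 2 * Real.sqrt 2 + 2 / 3) + 3) ^ 2)
    (hν : ν = min (max σ2 (ε ^ 2 * μ ^ 2) / (b - a) ^ 2)
      (ε ^ 2 * μ ^ 2 / ((1 + ε) ^ 2 * max σ2 (ε ^ 2 * μ ^ 2) * γ))) :
    P {ω | (⌈2 / ν * (p * Real.log (2 * p / ν) + Real.log (3 / (c * δ)))⌉ : ℤ)
        < (Mstop a b d Z ε ω : ℤ)} ≤ ENNReal.ofReal (4 * δ / 3) := by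
  obtain ⟨hε0, hε1⟩ := hε
  have hp0 : 0 < p := lt_trans one_pos hp
  have hc0 : 0 < c := by rw [hc]; exact div_pos (by linarith) hp0
  have hc1 : c < 1 := by
    rw [hc, div_lt_one hp0]; linarith
  -- basic positivity
  have hR : (0:ℝ) < b - a := by linarith
  have hμ2 : (0:ℝ) < μ^2 := pow_two_pos_of_ne_zero hμ0
  have hεμ : (0:ℝ) < ε^2 * μ^2 := mul_pos (pow_pos hε0 2) hμ2
  obtain ⟨v, hvdef⟩ : ∃ x : ℝ, x = max σ2 (ε^2*μ^2) := ⟨_, rfl⟩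
  have hσ2nn : 0 ≤ σ2 := hσ2 ▸ variance_nonneg _ _
  have hv0 : 0 < v := by rw [hvdef]; exact lt_of_lt_of_le hεμ (le_max_right _ _)
  have hσ2v : σ2 ≤ v := hvdef ▸ le_max_left _ _
  have hεμv : ε^2*μ^2 ≤ v := hvdef ▸ le_max_right _ _
  obtain ⟨sqγ, hsqγdef⟩ : ∃ x : ℝ, x = Real.sqrt (2 + 2*Real.sqrt 2 + 2/3) + 3 := ⟨_, rfl⟩
  have hsqγ3 : 3 ≤ sqγ := by
    rw [hsqγdef]; have := Real.sqrt_nonneg (2 + 2*Real.sqrt 2 + 2/3); linarith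
  have hsqγ0 : 0 < sqγ := by linarith
  have hγeq : γ = sqγ^2 := by rw [hγ, hsqγdef]
  have hγ0 : 0 < γ := by rw [hγeq]; positivity
  have hγ9 : 9 ≤ γ := by
    rw [hγeq]
    calc (9:ℝ) = 3^2 := by norm_num
      _ ≤ sqγ^2 := pow_le_pow_left₀ (by norm_num) hsqγ3 2
  have h13 : Real.sqrt (13/3) + 3 ≤ sqγ := by
    have h56 : (5/6:ℝ) ≤ Real.sqrt 2 := by
      calc (5/6:ℝ) = Real.sqrt ((5/6)^2) := (Real.sqrt_sq (by norm_num)).symm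
        _ ≤ Real.sqrt 2 := Real.sqrt_le_sqrt (by norm_num)
    have : Real.sqrt (13/3) ≤ Real.sqrt (2 + 2*Real.sqrt 2 + 2/3) :=
      Real.sqrt_le_sqrt (by linarith)
    rw [hsqγdef]; linarith
  -- ν facts
  have hν0 : 0 < ν := by
    rw [hν]
    apply lt_min
    · apply div_pos (lt_of_lt_of_le hεμ (le_max_right _ _)) (by positivity)
    · apply div_pos hεμ
      apply mul_pos (mul_pos (by positivity) (lt_of_lt_of_le hεμ (le_max_right _ _))) hγ0
  have hν1 : (b-a)^2 * ν ≤ v := by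
    have h1 : ν ≤ v / (b-a)^2 := by
      rw [hvdef]; exact (hν ▸ min_le_left _ _)
    calc (b-a)^2 * ν ≤ (b-a)^2 * (v/(b-a)^2) := mul_le_mul_of_nonneg_left h1 (by positivity)
      _ = v := by field_simp
  have hν2 : v * ν ≤ ε^2*μ^2 / ((1+ε)^2 * γ) := by
    have h1 : ν ≤ ε^2*μ^2 / ((1+ε)^2 * v * γ) := by
      rw [hvdef]; exact (hν ▸ min_le_right _ _)
    calc v * ν ≤ v * (ε^2*μ^2 / ((1+ε)^2 * v * γ)) := mul_le_mul_of_nonneg_left h1 hv0.le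
      _ = ε^2*μ^2 / ((1+ε)^2 * γ) := by field_simp
  have hν9 : ν ≤ 1/9 := by
    have h1 : ν ≤ ε^2*μ^2 / ((1+ε)^2 * v * γ) := by
      rw [hvdef]; exact (hν ▸ min_le_right _ _)
    have h2 : ε^2*μ^2 / ((1+ε)^2 * v * γ) ≤ v / (9 * v) := by
      apply div_le_div₀ hv0.le hεμv (by positivity)
      have e1 : (1:ℝ) ≤ (1+ε)^2 := by
        calc (1:ℝ) = 1^2 := by norm_num
          _ ≤ (1+ε)^2 := pow_le_pow_left₀ (by norm_num) (by linarith) 2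
      calc (9:ℝ) * v = 1 * (v * 9) := by ring
        _ ≤ (1+ε)^2 * (v * γ) := by
            apply mul_le_mul e1 (mul_le_mul_of_nonneg_left hγ9 hv0.le) (by positivity)
              (by positivity)
        _ = (1+ε)^2 * v * γ := by ring
    have h3 : v / (9*v) = 1/9 := by field_simp
    linarith
  -- the quantities A, B
  have hEnn : (0:ℝ) ≤ ε * |μ| / ((1+ε) * sqγ) := by positivity
  have hEsq : (ε * |μ| / ((1+ε) * sqγ))^2 = ε^2*μ^2 / ((1+ε)^2 * γ) := by
    rw [div_pow, mul_pow, mul_pow, sq_abs, hγeq]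
  have hA : Real.sqrt (v * ν) ≤ ε * |μ| / ((1+ε) * sqγ) := by
    calc Real.sqrt (v * ν) ≤ Real.sqrt ((ε * |μ| / ((1+ε) * sqγ))^2) :=
          Real.sqrt_le_sqrt (by rw [hEsq]; exact hν2)
      _ = ε * |μ| / ((1+ε) * sqγ) := Real.sqrt_sq hEnn
  have hB : (b-a) * ν ≤ ε * |μ| / ((1+ε) * sqγ) := by
    have h1 : ((b-a) * ν)^2 ≤ (ε * |μ| / ((1+ε) * sqγ))^2 := by
      rw [hEsq]
      calc ((b-a)*ν)^2 = ((b-a)^2*ν) * ν := by ring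
        _ ≤ v * ν := mul_le_mul_of_nonneg_right hν1 hν0.le
        _ ≤ ε^2*μ^2 / ((1+ε)^2 * γ) := hν2
    calc (b-a)*ν = Real.sqrt (((b-a)*ν)^2) := (Real.sqrt_sq (by positivity)).symm
      _ ≤ Real.sqrt ((ε * |μ| / ((1+ε) * sqγ))^2) := Real.sqrt_le_sqrt h1
      _ = ε * |μ| / ((1+ε) * sqγ) := Real.sqrt_sq hEnn
  -- L₀ and m₀
  obtain ⟨L₀, hL₀def⟩ : ∃ x : ℝ, x = Real.log (3 / (c * δ)) := ⟨_, rfl⟩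
  have hcδ0 : 0 < c * δ := mul_pos hc0 hδ
  have hcδ3 : c * δ < 3 := by
    have h1 : c * δ < 1 * δ := mul_lt_mul_of_pos_right hc1 hδ
    linarith
  have hL₀pos : 0 < L₀ := by
    rw [hL₀def]
    apply Real.log_pos
    rw [lt_div_iff₀ hcδ0]; linarith
  have hlog2p : 0 ≤ Real.log (2*p/ν) := by
    apply Real.log_nonneg
    rw [le_div_iff₀ hν0, one_mul]; linarith
  obtain ⟨base, hbasedef⟩ : ∃ x : ℝ,
      x = 2/ν * (p * Real.log (2*p/ν) + Real.log (3/(c*δ))) := ⟨_, rfl⟩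
  have hbase' : base = 2/ν * (p * Real.log (2*p/ν) + L₀) := by rw [hbasedef, hL₀def]
  have hSpos : 0 < p * Real.log (2*p/ν) + L₀ := by
    have := mul_nonneg hp0.le hlog2p
    linarith
  have hbasepos : 0 < base := by
    rw [hbase']
    positivity
  obtain ⟨m₀, hm₀def⟩ : ∃ x : ℕ, x = (⌈base⌉ : ℤ).toNat := ⟨_, rfl⟩
  have hceil_pos : 0 < ⌈base⌉ := Int.ceil_pos.mpr hbasepos
  have hm₀1 : 1 ≤ m₀ := by
    rw [hm₀def]
    omega
  have hm₀Z : (m₀ : ℤ) = ⌈base⌉ := by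
    rw [hm₀def]
    exact Int.toNat_of_nonneg hceil_pos.le
  have hm₀base : base ≤ (m₀ : ℝ) := by
    have h1 : base ≤ (⌈base⌉ : ℝ) := Int.le_ceil base
    have h2 : ((m₀:ℝ)) = ((⌈base⌉ : ℤ) : ℝ) := by exact_mod_cast hm₀Z
    linarith
  have hm₀R : (0:ℝ) < m₀ := by exact_mod_cast hm₀1
  -- K1
  have hbaseν : base * ν = 2 * (p * Real.log (2*p/ν) + L₀) := by
    rw [hbase']
    field_simp
  have hK1 : 2 * L₀ ≤ m₀ * ν := by
    have h1 : base * ν ≤ m₀ * ν := mul_le_mul_of_nonneg_right hm₀base hν0.le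
    rw [hbaseν] at h1
    linarith [mul_nonneg hp0.le hlog2p]
  -- K2
  have hdm₀ : d m₀ = δ * c * (m₀:ℝ)^(-p) := hd m₀ hm₀1
  have hLf : Real.log (3 / d m₀) = L₀ + p * Real.log (m₀:ℝ) := by
    rw [hdm₀, Real.rpow_neg hm₀R.le]
    rw [show (3:ℝ) / (δ * c * ((m₀:ℝ)^p)⁻¹) = 3/(c*δ) * (m₀:ℝ)^p by
      rw [div_mul_eq_div_div]
      field_simp]
    rw [Real.log_mul (by positivity) (by positivity : ((m₀:ℝ)^p) ≠ 0)]
    · rw [Real.log_rpow hm₀R, hL₀def]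
  have hlogm₀ : p * Real.log (m₀:ℝ) ≤ (m₀:ℝ) * ν / 2 + p * Real.log (2*p/ν) := by
    have hpos1 : (0:ℝ) < (m₀:ℝ) * ν / (2*p) := by positivity
    have hfact : (m₀:ℝ) = ((m₀:ℝ) * ν / (2*p)) * (2*p/ν) := by
      field_simp
    have h1 : Real.log (m₀:ℝ) = Real.log ((m₀:ℝ)*ν/(2*p)) + Real.log (2*p/ν) := by
      rw [show Real.log (m₀:ℝ) = Real.log (((m₀:ℝ)*ν/(2*p)) * (2*p/ν)) from by rw [← hfact]]
      exact Real.log_mul (ne_of_gt hpos1) (by positivity)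
    have h2 : Real.log ((m₀:ℝ)*ν/(2*p)) ≤ (m₀:ℝ)*ν/(2*p) - 1 :=
      Real.log_le_sub_one_of_pos hpos1
    have h3 : Real.log (m₀:ℝ) ≤ (m₀:ℝ)*ν/(2*p) + Real.log (2*p/ν) := by linarith
    calc p * Real.log (m₀:ℝ) ≤ p * ((m₀:ℝ)*ν/(2*p) + Real.log (2*p/ν)) :=
          mul_le_mul_of_nonneg_left h3 hp0.le
      _ = (m₀:ℝ)*ν/2 + p * Real.log (2*p/ν) := by field_simp
  have hK2 : Real.log (3 / d m₀) ≤ m₀ * ν := by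
    rw [hLf]
    have h1 : base * ν ≤ m₀ * ν := mul_le_mul_of_nonneg_right hm₀base hν0.le
    rw [hbaseν] at h1
    linarith
  have hLfge : L₀ ≤ Real.log (3 / d m₀) := by
    rw [hLf]
    have h0 : 0 ≤ Real.log (m₀:ℝ) := Real.log_nonneg (by exact_mod_cast hm₀1)
    linarith [mul_nonneg hp0.le h0]
  -- integrability and moments
  have hbig : ∀ i, ∀ᵐ ω ∂P, |Z i ω| ≤ max |a| |b| := fun i =>
    (hbdd i).mono fun ω hω => abs_le_max_abs_abs hω.1 hω.2
  have hint : ∀ i, Integrable (Z i) P := fun i =>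
    integrable_of_abs_le (hmeas i).aestronglyMeasurable (hbig i)
  have hmean_i : ∀ i, ∫ ω, Z i ω ∂P = μ := fun i => by
    rw [(hident i).integral_eq, ← hμ]
  have hμa : a ≤ μ := by
    have h1 : ∫ (_ : Ω), a ∂P ≤ ∫ ω, Z 0 ω ∂P :=
      integral_mono_ae (integrable_const a) (hint 0) ((hbdd 0).mono fun ω hω => hω.1)
    rw [hμ]
    simpa using h1
  have hμb : μ ≤ b := by
    have h1 : ∫ ω, Z 0 ω ∂P ≤ ∫ (_ : Ω), b ∂P :=
      integral_mono_ae (hint 0) (integrable_const b) ((hbdd 0).mono fun ω hω => hω.2)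
    rw [hμ]
    simpa using h1
  have hbddc : ∀ i, ∀ᵐ ω ∂P, |Z i ω - μ| ≤ b - a := fun i =>
    (hbdd i).mono fun ω hω => by
      rw [abs_le]
      constructor
      · linarith [hω.1]
      · linarith [hω.2]
  have hmeanc : ∀ i, ∫ ω, (Z i ω - μ) ∂P = 0 := fun i => by
    rw [integral_sub (hint i) (integrable_const μ), hmean_i i, integral_const]
    simp
  have hmeasd : ∀ i, Measurable (fun ω => Z i ω - μ) := fun i => (hmeas i).sub_const μ
  have hbddsq : ∀ i, ∀ᵐ ω ∂P, (Z i ω - μ)^2 ≤ (b-a)^2 := fun i =>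
    (hbddc i).mono fun ω hω => sq_le_sq' (abs_le.mp hω).1 (abs_le.mp hω).2
  have hintc : ∀ i, Integrable (fun ω => (Z i ω - μ)^2) P := fun i =>
    integrable_of_abs_le ((hmeasd i).pow_const 2).aestronglyMeasurable
      ((hbddsq i).mono fun ω hω => by
        rw [abs_of_nonneg (sq_nonneg _)]
        exact hω)
  have hσ2eq : ∫ ω, (Z 0 ω - μ)^2 ∂P = σ2 := by
    have hmem : MemLp (Z 0) 2 P :=
      MemLp.of_bound (hmeas 0).aestronglyMeasurable (max |a| |b|)
        ((hbig 0).mono fun ω hω => by simpa [Real.norm_eq_abs] using hω)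
    rw [hσ2, variance_eq_integral hmem.aemeasurable]
    refine integral_congr_ae (Filter.Eventually.of_forall fun ω => ?_)
    simp [Pi.pow_apply, Pi.sub_apply, hμ]
  have hvar_i : ∀ i, ∫ ω, (Z i ω - μ)^2 ∂P = σ2 := fun i => by
    have hid2 : IdentDistrib (fun ω => (Z i ω - μ)^2) (fun ω => (Z 0 ω - μ)^2) P P :=
      (hident i).comp ((measurable_id.sub_const μ).pow_const 2)
    rw [hid2.integral_eq]
    exact hσ2eq
  have hσ2R : σ2 ≤ (b-a)^2 := by
    rw [← hσ2eq]
    have h1 : ∫ ω, (Z 0 ω - μ)^2 ∂P ≤ ∫ (_ : Ω), (b-a)^2 ∂P :=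
      integral_mono_ae (hintc 0) (integrable_const _) (hbddsq 0)
    simpa using h1
  -- the squared centered variables
  have hWbdd : ∀ i, ∀ᵐ ω ∂P, |(Z i ω - μ)^2 - σ2| ≤ (b-a)^2 := fun i =>
    (hbddsq i).mono fun ω hω => by
      rw [abs_le]
      constructor
      · linarith [sq_nonneg (Z i ω - μ)]
      · linarith [hσ2nn]
  have hWmean : ∀ i, ∫ ω, ((Z i ω - μ)^2 - σ2) ∂P = 0 := fun i => by
    rw [integral_sub (hintc i) (integrable_const σ2), hvar_i i, integral_const]
    simp
  have hint4 : ∀ i, Integrable (fun ω => (Z i ω - μ)^4) P := fun i =>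
    integrable_of_abs_le ((hmeasd i).pow_const 4).aestronglyMeasurable
      (C := ((b-a)^2)^2) ((hbddsq i).mono fun ω hω => by
        have h1 : ((Z i ω - μ)^2)^2 ≤ ((b-a)^2)^2 :=
          pow_le_pow_left₀ (sq_nonneg _) hω 2
        have h2 : |(Z i ω - μ)^4| = ((Z i ω - μ)^2)^2 := by
          rw [abs_of_nonneg (by positivity)]; ring
        calc |(Z i ω - μ)^4| = ((Z i ω - μ)^2)^2 := h2
          _ ≤ ((b-a)^2)^2 := h1)
  have hWvar : ∀ i, ∫ ω, ((Z i ω - μ)^2 - σ2)^2 ∂P ≤ (b-a)^2 * v := fun i => by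
    have h4 : ∫ ω, (Z i ω - μ)^4 ∂P ≤ (b-a)^2 * σ2 := by
      have hmono : ∫ ω, (Z i ω - μ)^4 ∂P ≤ ∫ ω, (b-a)^2 * (Z i ω - μ)^2 ∂P := by
        refine integral_mono_ae (hint4 i) ((hintc i).const_mul _)
          ((hbddsq i).mono fun ω hω => ?_)
        have h1 := mul_le_mul_of_nonneg_right hω (sq_nonneg (Z i ω - μ))
        calc (Z i ω - μ)^4 = (Z i ω - μ)^2 * (Z i ω - μ)^2 := by ring
          _ ≤ (b-a)^2 * (Z i ω - μ)^2 := h1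
      rwa [integral_const_mul, hvar_i i] at hmono
    have heq : (fun ω => ((Z i ω - μ)^2 - σ2)^2)
        = fun ω => ((Z i ω - μ)^4 - (2*σ2) * ((Z i ω - μ)^2)) + σ2^2 := by
      ext ω; ring
    have hi1 : Integrable (fun ω => (Z i ω - μ)^4 - (2*σ2) * ((Z i ω - μ)^2)) P :=
      (hint4 i).sub ((hintc i).const_mul _)
    rw [heq, integral_add hi1 (integrable_const _),
      integral_sub (hint4 i) ((hintc i).const_mul _), integral_const_mul, hvar_i i,
      integral_const]
    simp only [measure_univ, probReal_univ, ENNReal.toReal_one, smul_eq_mul, one_mul]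
    have hσv : (b-a)^2 * σ2 ≤ (b-a)^2 * v := mul_le_mul_of_nonneg_left hσ2v (by positivity)
    have hσσ : 0 ≤ σ2 * σ2 := mul_nonneg hσ2nn hσ2nn
    calc ∫ ω, (Z i ω - μ)^4 ∂P - 2*σ2*σ2 + σ2^2
        = ∫ ω, (Z i ω - μ)^4 ∂P - σ2*σ2 := by ring
      _ ≤ (b-a)^2 * σ2 := by linarith
      _ ≤ (b-a)^2 * v := hσv
  -- independence of the transformed sequences
  have hind1 : iIndepFun (fun i => fun ω => Z i ω - μ) P :=
    hindep.comp (fun _ => fun x => x - μ) (fun _ => measurable_id.sub_const μ)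
  have hind2 : iIndepFun (fun i => fun ω => μ - Z i ω) P :=
    hindep.comp (fun _ => fun x => μ - x) (fun _ => measurable_const.sub measurable_id)
  have hind3 : iIndepFun
      (fun i => fun ω => (Z i ω - μ)^2 - σ2) P :=
    hindep.comp (fun _ => fun x => (x - μ)^2 - σ2)
      (fun _ => ((measurable_id.sub_const μ).pow_const 2).sub_const σ2)
  -- Bernstein hypotheses
  have hR2ν : 2 * L₀ * (b-a)^2 ≤ (m₀:ℝ) * v := by
    have h1 : 2*L₀*(b-a)^2 ≤ ((m₀:ℝ)*ν)*(b-a)^2 :=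
      mul_le_mul_of_nonneg_right hK1 (by positivity)
    have h2 : (m₀:ℝ)*((b-a)^2*ν) ≤ (m₀:ℝ)*v := mul_le_mul_of_nonneg_left hν1 hm₀R.le
    calc 2*L₀*(b-a)^2 ≤ ((m₀:ℝ)*ν)*(b-a)^2 := h1
      _ = (m₀:ℝ)*((b-a)^2*ν) := by ring
      _ ≤ (m₀:ℝ)*v := h2
  have hR4ν : 2 * L₀ * ((b-a)^2)^2 ≤ (m₀:ℝ) * ((b-a)^2 * v) := by
    calc 2*L₀*((b-a)^2)^2 = (2*L₀*(b-a)^2)*(b-a)^2 := by ring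
      _ ≤ ((m₀:ℝ)*v)*(b-a)^2 := mul_le_mul_of_nonneg_right hR2ν (by positivity)
      _ = (m₀:ℝ)*((b-a)^2*v) := by ring
  -- three Bernstein bounds
  have hb1 : P {ω | Real.sqrt (2*v*m₀*L₀) + (b-a)*L₀/3
        ≤ ∑ i ∈ Finset.range m₀, (Z i ω - μ)} ≤ ENNReal.ofReal (Real.exp (-L₀)) :=
    bernstein_sum P (fun i => fun ω => Z i ω - μ) hmeasd hind1 (b-a) v L₀ m₀
      hR hv0 hL₀pos hm₀1 hR2ν hbddc hmeanc (fun i => (hvar_i i).le.trans hσ2v)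
  have hb2 : P {ω | Real.sqrt (2*v*m₀*L₀) + (b-a)*L₀/3
        ≤ ∑ i ∈ Finset.range m₀, (μ - Z i ω)} ≤ ENNReal.ofReal (Real.exp (-L₀)) := by
    refine bernstein_sum P (fun i => fun ω => μ - Z i ω)
      (fun i => measurable_const.sub (hmeas i)) hind2 (b-a) v L₀ m₀
      hR hv0 hL₀pos hm₀1 hR2ν (fun i => (hbddc i).mono fun ω hω => by
        rwa [abs_sub_comm]) (fun i => ?_) (fun i => ?_)
    · rw [integral_sub (integrable_const μ) (hint i), hmean_i i, integral_const]
      simp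
    · have heq : (fun ω => (μ - Z i ω)^2) = fun ω => (Z i ω - μ)^2 := by ext ω; ring
      calc ∫ ω, (μ - Z i ω)^2 ∂P = ∫ ω, (Z i ω - μ)^2 ∂P := by rw [heq]
        _ ≤ v := (hvar_i i).le.trans hσ2v
  have hb3 : P {ω | Real.sqrt (2*((b-a)^2*v)*m₀*L₀) + (b-a)^2*L₀/3
        ≤ ∑ i ∈ Finset.range m₀, ((Z i ω - μ)^2 - σ2)}
      ≤ ENNReal.ofReal (Real.exp (-L₀)) :=
    bernstein_sum P (fun i => fun ω => (Z i ω - μ)^2 - σ2)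
      (fun i => ((hmeasd i).pow_const 2).sub_const σ2) hind3 ((b-a)^2) ((b-a)^2*v) L₀ m₀
      (by positivity) (by positivity) hL₀pos hm₀1 hR4ν hWbdd hWmean hWvar
  -- event inclusion
  have hsub : {ω | (⌈2 / ν * (p * Real.log (2 * p / ν) + Real.log (3 / (c * δ)))⌉ : ℤ)
        < (Mstop a b d Z ε ω : ℤ)}
      ⊆ {ω | Real.sqrt (2*v*m₀*L₀) + (b-a)*L₀/3
          ≤ ∑ i ∈ Finset.range m₀, (Z i ω - μ)}
        ∪ ({ω | Real.sqrt (2*v*m₀*L₀) + (b-a)*L₀/3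
          ≤ ∑ i ∈ Finset.range m₀, (μ - Z i ω)}
        ∪ {ω | Real.sqrt (2*((b-a)^2*v)*m₀*L₀) + (b-a)^2*L₀/3
          ≤ ∑ i ∈ Finset.range m₀, ((Z i ω - μ)^2 - σ2)}) := by
    intro ω hω
    by_contra hnot
    simp only [Set.mem_union, Set.mem_setOf_eq, not_or, not_le] at hnot
    obtain ⟨h1, h2, h3⟩ := hnot
    have hdet : confRad a b d Z m₀ ω ≤ ε * |empMean Z m₀ ω| :=
      det_main Z ω a b μ σ2 ε ν v (b-a) L₀ sqγ d m₀ hm₀1 rfl hR hσ2nn hσ2v hv0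
        hε0 hε1.le hν0 hν1 hA hB h13 hsqγ3 hL₀pos hLfge hK1 hK2 h1 h2 h3
    have hmem : m₀ ∈ {m : ℕ | 1 ≤ m ∧ confRad a b d Z m ω ≤ ε * |empMean Z m ω|} :=
      ⟨hm₀1, hdet⟩
    have hle : Mstop a b d Z ε ω ≤ m₀ := Nat.sInf_le hmem
    rw [Set.mem_setOf_eq, ← hbasedef, ← hm₀Z] at hω
    exact absurd hω (by exact_mod_cast not_lt.mpr hle)
  -- put everything together
  have hexpL : Real.exp (-L₀) = c * δ / 3 := by
    rw [hL₀def, Real.exp_neg, Real.exp_log (by positivity), inv_div]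
  calc P {ω | (⌈2 / ν * (p * Real.log (2 * p / ν) + Real.log (3 / (c * δ)))⌉ : ℤ)
        < (Mstop a b d Z ε ω : ℤ)}
      ≤ P ({ω | Real.sqrt (2*v*m₀*L₀) + (b-a)*L₀/3
          ≤ ∑ i ∈ Finset.range m₀, (Z i ω - μ)}
        ∪ ({ω | Real.sqrt (2*v*m₀*L₀) + (b-a)*L₀/3
          ≤ ∑ i ∈ Finset.range m₀, (μ - Z i ω)}
        ∪ {ω | Real.sqrt (2*((b-a)^2*v)*m₀*L₀) + (b-a)^2*L₀/3
          ≤ ∑ i ∈ Finset.range m₀, ((Z i ω - μ)^2 - σ2)})) := measure_mono hsub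
    _ ≤ P {ω | Real.sqrt (2*v*m₀*L₀) + (b-a)*L₀/3
          ≤ ∑ i ∈ Finset.range m₀, (Z i ω - μ)}
        + (P {ω | Real.sqrt (2*v*m₀*L₀) + (b-a)*L₀/3
          ≤ ∑ i ∈ Finset.range m₀, (μ - Z i ω)}
        + P {ω | Real.sqrt (2*((b-a)^2*v)*m₀*L₀) + (b-a)^2*L₀/3
          ≤ ∑ i ∈ Finset.range m₀, ((Z i ω - μ)^2 - σ2)}) :=
        le_trans (measure_union_le _ _) (by
          exact add_le_add le_rfl (measure_union_le _ _))
    _ ≤ ENNReal.ofReal (Real.exp (-L₀)) + (ENNReal.ofReal (Real.exp (-L₀))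
        + ENNReal.ofReal (Real.exp (-L₀))) := add_le_add hb1 (add_le_add hb2 hb3)
    _ = ENNReal.ofReal (Real.exp (-L₀) + (Real.exp (-L₀) + Real.exp (-L₀))) := by
        rw [← ENNReal.ofReal_add (Real.exp_nonneg _) (Real.exp_nonneg _),
          ← ENNReal.ofReal_add (Real.exp_nonneg _) (by positivity)]
    _ ≤ ENNReal.ofReal (4 * δ / 3) := by
        apply ENNReal.ofReal_le_ofReal
        rw [hexpL]
        have h1 : c * δ ≤ 1 * δ := mul_le_mul_of_nonneg_right hc1.le hδ.le
        linarith
end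

section
/- Let Ξ be a nonempty finite set, τ ∈ (0,1), and set ε = τ/(2+τ). Let E, Ê : Ξ → ℝ be functions with E(ξ) ≠ 0 for all ξ, and suppose |E(ξ) - Ê(ξ)| ≤ ε |E(ξ)| for every ξ ∈ Ξ. Let ξ* maximize E over Ξ and let ξ̂ maximize Ê over Ξ. Then E(ξ*) - E(ξ̂) ≤ τ |E(ξ*)|. -/
/-- deterministic core of the non-adaptive algorithm's correctness. -/
theorem stmt_6 {Ξ : Type*} [Fintype Ξ] [Nonempty Ξ] (τ : ℝ)
    (hτ : τ ∈ Set.Ioo (0 : ℝ) 1) (E Ehat : Ξ → ℝ) (hE : ∀ ξ, E ξ ≠ 0)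
    (happrox : ∀ ξ, |E ξ - Ehat ξ| ≤ (τ / (2 + τ)) * |E ξ|)
    (ξstar ξhat : Ξ) (hstar : ∀ ξ, E ξ ≤ E ξstar) (hhat : ∀ ξ, Ehat ξ ≤ Ehat ξhat) :
    E ξstar - E ξhat ≤ τ * |E ξstar| := by
  obtain ⟨hτ0, hτ1⟩ := hτ
  have hp : (0:ℝ) < 2 + τ := by linarith
  have hεdef : τ / (2 + τ) * (2 + τ) = τ := div_mul_cancel₀ _ (ne_of_gt hp)
  obtain ⟨h1, h2⟩ := abs_le.mp (happrox ξstar)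
  obtain ⟨h3, h4⟩ := abs_le.mp (happrox ξhat)
  have h5 : Ehat ξstar ≤ Ehat ξhat := hhat ξstar
  have h6 : E ξhat ≤ E ξstar := hstar ξhat
  have hεpos : 0 < τ / (2 + τ) := div_pos hτ0 hp
  rcases le_or_gt 0 (E ξhat) with hh | hh
  · have hs : 0 ≤ E ξstar := le_trans hh h6
    rw [abs_of_nonneg hh] at h3 h4
    rw [abs_of_nonneg hs] at h1 h2 ⊢
    nlinarith [mul_le_mul_of_nonneg_left h6 (le_of_lt hεpos)]
  · rw [abs_of_neg hh] at h3 h4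
    rcases le_or_gt 0 (E ξstar) with hs | hs
    · rw [abs_of_nonneg hs] at h1 h2 ⊢
      nlinarith
    · rw [abs_of_neg hs] at h1 h2 ⊢
      nlinarith
end

section
/- Let Ξ be a nonempty finite set, τ ∈ (0,1), and set ε = τ/(2+τ). Let E, Ê : Ξ → ℝ be functions with E(ξ) ≠ 0 for all ξ, let ξ* maximize E over Ξ, and assume E(ξ*) > 0. Suppose |E(ξ) - Ê(ξ)| ≤ ε |E(ξ)| for every ξ ∈ Ξ, and let ξ̂ maximize Ê over Ξ. Then E(ξ̂) > 0, Ê(ξ̂) > 0, and E(ξ*) - E(ξ̂) ≤ (2ε/(1+ε)) |E(ξ*)|. -/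
/-- improved deterministic bound when the maximal expectation is positive. -/
theorem stmt_8 {Ξ : Type*} [Fintype Ξ] [Nonempty Ξ] (τ : ℝ)
    (hτ : τ ∈ Set.Ioo (0 : ℝ) 1) (E Ehat : Ξ → ℝ) (hE : ∀ ξ, E ξ ≠ 0)
    (ξstar : Ξ) (hstar : ∀ ξ, E ξ ≤ E ξstar) (hpos : 0 < E ξstar)
    (happrox : ∀ ξ, |E ξ - Ehat ξ| ≤ (τ / (2 + τ)) * |E ξ|)
    (ξhat : Ξ) (hhat : ∀ ξ, Ehat ξ ≤ Ehat ξhat) :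
    0 < E ξhat ∧ 0 < Ehat ξhat ∧
      E ξstar - E ξhat ≤ (2 * (τ / (2 + τ)) / (1 + τ / (2 + τ))) * |E ξstar| := by
  obtain ⟨hτ0, hτ1⟩ := hτ
  set ε := τ / (2 + τ) with hεdef
  have h2τ : (0:ℝ) < 2 + τ := by linarith
  have hε0 : 0 < ε := div_pos hτ0 h2τ
  have hε1 : ε < 1 := by
    rw [hεdef, div_lt_one h2τ]; linarith
  have hstar_abs : |E ξstar| = E ξstar := abs_of_pos hpos
  have h1 := happrox ξstar
  rw [hstar_abs, abs_le] at h1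
  have hEhs : (1 - ε) * E ξstar ≤ Ehat ξstar := by linarith
  have hEhatpos : 0 < Ehat ξhat := by
    have : (0:ℝ) < (1 - ε) * E ξstar := by nlinarith
    linarith [hhat ξstar]
  have h2 := happrox ξhat
  rw [abs_le] at h2
  have hEpos : 0 < E ξhat := by
    by_contra h
    push_neg at h
    have hneg : E ξhat < 0 := lt_of_le_of_ne h (hE ξhat)
    have : |E ξhat| = -E ξhat := abs_of_neg hneg
    rw [this] at h2
    nlinarith
  have habs : |E ξhat| = E ξhat := abs_of_pos hEpos
  rw [habs] at h2
  refine ⟨hEpos, hEhatpos, ?_⟩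
  have key : (1 - ε) * E ξstar ≤ (1 + ε) * E ξhat := by
    have := hhat ξstar
    linarith
  rw [hstar_abs]
  have h1ε : (0:ℝ) < 1 + ε := by linarith
  rw [div_mul_eq_mul_div, le_div_iff₀ h1ε]
  nlinarith [key]
end

section
/- Let q, k be positive real numbers. If t > 0 satisfies log(q t)/t = k, then t ≤ (2/k) log(2q/k). -/
/-- bound on solutions of log(qt)/t = k. -/
theorem stmt_12 (q k t : ℝ) (hq : 0 < q) (hk : 0 < k) (ht : 0 < t)
    (h : Real.log (q * t) / t = k) : t ≤ 2 / k * Real.log (2 * q / k) := by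
  have hlog : Real.log (q * t) = k * t := by
    field_simp at h; linarith
  have h1 : (0:ℝ) < 2 * q / k := by positivity
  have h2 : (0:ℝ) < k * t / 2 := by positivity
  have heq : q * t = (2 * q / k) * (k * t / 2) := by field_simp
  have hsplit : Real.log (q * t) = Real.log (2 * q / k) + Real.log (k * t / 2) := by
    rw [heq, Real.log_mul (ne_of_gt h1) (ne_of_gt h2)]
  have hle : Real.log (k * t / 2) ≤ k * t / 2 - 1 :=
    Real.log_le_sub_one_of_pos h2
  have : k * t / 2 ≤ Real.log (2 * q / k) := by linarith [hlog, hsplit]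
  rw [div_mul_eq_mul_div, le_div_iff₀ hk]
  linarith
end

section
/- Let q, k be positive real numbers such that the equation log(q t)/t = k has a solution t > 0. Then for every t' ≥ (2/k) log(2q/k), one has log(q t')/t' ≤ k. -/
/-- past the threshold (2/k) log(2q/k), log(qt)/t stays below k. -/
theorem stmt_13 (q k : ℝ) (hq : 0 < q) (hk : 0 < k)
    (hsol : ∃ t : ℝ, 0 < t ∧ Real.log (q * t) / t = k)
    (t' : ℝ) (ht' : 2 / k * Real.log (2 * q / k) ≤ t') :
    Real.log (q * t') / t' ≤ k := by
  obtain ⟨t, ht, heq⟩ := hsol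
  have heq' : Real.log (q * t) = k * t := by
    field_simp at heq; linarith
  -- log x ≤ x / e
  have h1 : Real.log (q * t) ≤ q * t / Real.exp 1 := by
    have h := Real.log_le_sub_one_of_pos (x := q * t / Real.exp 1) (by positivity)
    rw [Real.log_div (by positivity) (Real.exp_ne_zero 1), Real.log_exp] at h
    linarith
  have hek : Real.exp 1 * k ≤ q := by
    have hepos := Real.exp_pos 1
    rw [heq', le_div_iff₀ hepos] at h1
    nlinarith [mul_pos hq ht]
  have he2 : (2 : ℝ) ≤ Real.exp 1 := by
    have := Real.add_one_le_exp 1; linarith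
  have hq2k : 1 < 2 * q / k := by
    rw [lt_div_iff₀ hk]; nlinarith
  have hlogpos : 0 < Real.log (2 * q / k) := Real.log_pos hq2k
  have ht'pos : 0 < t' :=
    lt_of_lt_of_le (by positivity) ht'
  have hlog2 : Real.log (2 * q / k) ≤ k * t' / 2 := by
    rw [div_mul_eq_mul_div, div_le_iff₀ hk] at ht'
    nlinarith
  have hsplit : q * t' = (2 * q / k) * (k * t' / 2) := by
    field_simp
  have h3 : Real.log (k * t' / 2) ≤ k * t' / 2 - 1 :=
    Real.log_le_sub_one_of_pos (by positivity)
  have key : Real.log (q * t') ≤ k * t' := by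
    rw [hsplit, Real.log_mul (by positivity) (by positivity)]
    linarith
  rw [div_le_iff₀ ht'pos]
  linarith
end

section
/- Let ε ∈ (0,1), let Z be a random variable taking values in [a,b] with E[Z] ≠ 0, and let (d_m)_{m≥1} be a sequence in (0,1) with log(3/d_m)/m → 0 as m → ∞. Then M = min{ m ≥ 1 : c_m ≤ ε |Z̄_m| } is finite almost surely. -/
open MeasureTheory ProbabilityTheory Filter

/-- the stopping time `M = min{m ≥ 1 : c_m ≤ ε |Z̄_m|}` is finite
almost surely, i.e. almost surely some `m ≥ 1` satisfies the stopping criterion. -/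
theorem stmt_14 {Ω : Type*} {mΩ : MeasurableSpace Ω} (P : Measure Ω)
    [IsProbabilityMeasure P] (a b : ℝ) (Z : ℕ → Ω → ℝ)
    (hmeas : ∀ i, Measurable (Z i))
    (hindep : iIndepFun Z P)
    (hident : ∀ i, IdentDistrib (Z i) (Z 0) P P)
    (hbdd : ∀ i, ∀ᵐ ω ∂P, Z i ω ∈ Set.Icc a b)
    (hmean : ∫ ω, Z 0 ω ∂P ≠ 0)
    (ε : ℝ) (hε : ε ∈ Set.Ioo (0 : ℝ) 1)
    (d : ℕ → ℝ) (hd : ∀ m, 1 ≤ m → d m ∈ Set.Ioo (0 : ℝ) 1)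
    (hdlim : Tendsto (fun m : ℕ => Real.log (3 / d m) / m) atTop (nhds 0)) :
    ∀ᵐ ω ∂P, ∃ m : ℕ, 1 ≤ m ∧ confRad a b d Z m ω ≤ ε * |empMean Z m ω| := by
  have hεpos := hε.1
  -- integrability
  set μ := ∫ ω, Z 0 ω ∂P with hμ
  have hint : Integrable (Z 0) P := by
    refine Integrable.mono' (integrable_const (max |a| |b|)) (hmeas 0).aestronglyMeasurable ?_
    filter_upwards [hbdd 0] with ω hω
    rw [Real.norm_eq_abs]
    exact abs_le_max_abs_abs hω.1 hω.2
  have hpair : Pairwise (Function.onFun (IndepFun · · P) Z) := fun i j hij => hindep.indepFun hij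
  have hslln := strong_law_ae_real Z hint hpair hident
  have hall : ∀ᵐ ω ∂P, ∀ i, Z i ω ∈ Set.Icc a b := ae_all_iff.2 hbdd
  -- a ≤ b
  -- the deterministic bound sequence
  set L : ℕ → ℝ := fun m => Real.log (3 / d m) / m with hL
  have hgL : Tendsto (fun m => Real.sqrt (2 * (b - a) ^ 2 * L m) + 3 * (b - a) * L m)
      atTop (nhds 0) := by
    have h1 : Tendsto (fun m => Real.sqrt (2 * (b - a) ^ 2 * L m)) atTop (nhds 0) := by
      have : Tendsto (fun m => 2 * (b - a) ^ 2 * L m) atTop (nhds 0) := by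
        have := hdlim.const_mul (2 * (b - a) ^ 2)
        simpa using this
      simpa [Function.comp_def] using (Real.continuous_sqrt.tendsto 0).comp this
    have h2 : Tendsto (fun m => 3 * (b - a) * L m) atTop (nhds 0) := by
      have := hdlim.const_mul (3 * (b - a))
      simpa using this
    simpa using h1.add h2
  filter_upwards [hslln, hall] with ω htend hbd
  -- a ≤ b since Z 0 ω ∈ [a,b]
  have hab : a ≤ b := le_trans (hbd 0).1 (hbd 0).2
  -- |empMean| → |μ|
  have habs : Tendsto (fun m => ε * |empMean Z m ω|) atTop (nhds (ε * |μ|)) := by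
    exact ((continuous_abs.tendsto μ).comp htend).const_mul ε
  have hμpos : 0 < ε * |μ| := mul_pos hεpos (abs_pos.2 hmean)
  have hev1 : ∀ᶠ m in atTop, ε * |μ| / 2 < ε * |empMean Z m ω| :=
    (tendsto_order.1 habs).1 _ (by linarith)
  have hev2 : ∀ᶠ m in atTop,
      Real.sqrt (2 * (b - a) ^ 2 * L m) + 3 * (b - a) * L m < ε * |μ| / 2 :=
    (tendsto_order.1 hgL).2 _ (by linarith)
  obtain ⟨m, ⟨⟨hlt1, hlt2⟩, hm3⟩⟩ := ((hev1.and hev2).and (eventually_ge_atTop 1)).exists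
  refine ⟨m, hm3, ?_⟩
  -- bound confRad by the deterministic sequence
  have hLnn : 0 ≤ Real.log (3 / d m) := by
    have hdm := hd m hm3
    have : 1 ≤ 3 / d m := by
      rw [le_div_iff₀ hdm.1]; linarith [hdm.2]
    exact Real.log_nonneg this
  have hmpos : (0:ℝ) < m := by exact_mod_cast hm3
  have hmean_mem : empMean Z m ω ∈ Set.Icc a b := by
    constructor
    · rw [empMean, le_div_iff₀ hmpos]
      calc a * m = ∑ _i ∈ Finset.range m, a := by simp [mul_comm]
        _ ≤ _ := Finset.sum_le_sum fun i _ => (hbd i).1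
    · rw [empMean, div_le_iff₀ hmpos]
      calc (∑ i ∈ Finset.range m, Z i ω) ≤ ∑ _i ∈ Finset.range m, b :=
            Finset.sum_le_sum fun i _ => (hbd i).2
        _ = b * m := by simp [mul_comm]
  have hvar : empVar Z m ω ≤ (b - a) ^ 2 := by
    rw [empVar, div_le_iff₀ hmpos]
    calc (∑ i ∈ Finset.range m, (Z i ω - empMean Z m ω) ^ 2)
        ≤ ∑ _i ∈ Finset.range m, (b - a) ^ 2 := by
          refine Finset.sum_le_sum fun i _ => ?_
          exact sq_le_sq' (by linarith [(hbd i).1, hmean_mem.2]) (by linarith [(hbd i).2, hmean_mem.1])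
        _ = (b - a) ^ 2 * m := by simp [mul_comm]
  have hconf : confRad a b d Z m ω ≤
      Real.sqrt (2 * (b - a) ^ 2 * L m) + 3 * (b - a) * L m := by
    have hLm : 0 ≤ Real.log (3 / d m) / m := div_nonneg hLnn hmpos.le
    have e1 : 2 * empVar Z m ω * Real.log (3 / d m) / m ≤ 2 * (b - a) ^ 2 * L m := by
      simp only [hL]
      rw [mul_div_assoc]
      exact mul_le_mul_of_nonneg_right (by linarith) hLm
    have e2 : 3 * (b - a) * Real.log (3 / d m) / m = 3 * (b - a) * L m := by
      simp only [hL]; rw [mul_div_assoc]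
    rw [confRad, e2]
    exact add_le_add (Real.sqrt_le_sqrt e1) le_rfl
  linarith
end
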